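/- arXiv:1701.04267 — 4 statements merged into one kernel-verified Lean document; each statement's English description precedes it below -/
import Mathlib

section
/- Let (X,‖·‖) be a separable real Banach space, let μ ∈ F_X with #S_μ ≤ 2, and let ν ∈ P_X. If the witness functions coincide, i.e., W_μ(x) = W_ν(x) for all x ∈ X, then μ = ν. -/
open MeasureTheory Metric Set TopologicalSpace ENNReal Filter

set_option linter.unusedSectionVars false
set_option maxHeartbeats 1000000

/-- The (one-sided) Lévy–Prokhorov distance of two Borel probability measures. -/
noncomputable def LPdist {X : Type*} [MetricSpace X] [MeasurableSpace X]
    (μ ν : ProbabilityMeasure X) : ℝ :=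
  sInf {ε : ℝ | 0 < ε ∧ ∀ A : Set X, MeasurableSet A →
    (μ : Measure X) A ≤ (ν : Measure X) (thickening ε A) + ENNReal.ofReal ε}

/-- The s-Lévy–Prokhorov distance. -/
noncomputable def LPsdist {X : Type*} [MetricSpace X] [MeasurableSpace X]
    (s : ℝ) (μ ν : ProbabilityMeasure X) : ℝ :=
  sInf {ε : ℝ | 0 < ε ∧ ∀ A : Set X, MeasurableSet A →
    ENNReal.ofReal s * (μ : Measure X) A ≤
      ENNReal.ofReal s * (ν : Measure X) (thickening ε A) + ENNReal.ofReal ε}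

/-- The support of a Borel probability measure. -/
def mSupport {X : Type*} [MetricSpace X] [MeasurableSpace X]
    (μ : ProbabilityMeasure X) : Set X :=
  {x : X | ∀ r : ℝ, 0 < r → 0 < (μ : Measure X) (ball x r)}

/-- The Dirac measure as a probability measure. -/
noncomputable def diracPM {X : Type*} [MeasurableSpace X] (x : X) : ProbabilityMeasure X :=
  ⟨Measure.dirac x, inferInstance⟩

/-- Finitely supported probability measures: finite convex combinations of Dirac measures. -/
def IsFinitelySupported {X : Type*} [MeasurableSpace X] (μ : ProbabilityMeasure X) : Prop :=
  ∃ (s : Finset X) (w : X → ℝ), (∀ x ∈ s, 0 < w x) ∧ (∑ x ∈ s, w x = 1) ∧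
    (μ : Measure X) = ∑ x ∈ s, ENNReal.ofReal (w x) • Measure.dirac x

/-- The unit distance set of a set of probability measures. -/
def unitDistSet {X : Type*} [MetricSpace X] [MeasurableSpace X]
    (𝒜 : Set (ProbabilityMeasure X)) : Set (ProbabilityMeasure X) :=
  {ν | ∀ μ ∈ 𝒜, LPdist μ ν = 1}

/-- The witness function. -/
noncomputable def witness {X : Type*} [MetricSpace X] [MeasurableSpace X]
    (μ : ProbabilityMeasure X) (x : X) : ℝ :=
  LPdist (diracPM x) μ

/-- The s-witness function. -/
noncomputable def switness {X : Type*} [MetricSpace X] [MeasurableSpace X]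
    (s : ℝ) (μ : ProbabilityMeasure X) (x : X) : ℝ :=
  LPsdist s (diracPM x) μ

section WitnessBasic

variable {X : Type*} [MetricSpace X] [MeasurableSpace X] [OpensMeasurableSpace X]

/-- The defining set of the witness function. -/
def wSet (μ : ProbabilityMeasure X) (x : X) : Set ℝ :=
  {ε : ℝ | 0 < ε ∧ ∀ A : Set X, MeasurableSet A →
    Measure.dirac x A ≤ (μ : Measure X) (thickening ε A) + ENNReal.ofReal ε}

lemma witness_eq (μ : ProbabilityMeasure X) (x : X) : witness μ x = sInf (wSet μ x) := rfl

lemma two_mem_wSet (μ : ProbabilityMeasure X) (x : X) : (2:ℝ) ∈ wSet μ x := by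
  refine ⟨two_pos, fun A hA => ?_⟩
  calc Measure.dirac x A ≤ 1 := prob_le_one
    _ ≤ ENNReal.ofReal 2 := by
        rw [show (1:ℝ≥0∞) = ENNReal.ofReal 1 by simp]
        exact ENNReal.ofReal_le_ofReal one_le_two
    _ ≤ _ := le_add_left le_rfl

lemma wSet_bddBelow (μ : ProbabilityMeasure X) (x : X) : BddBelow (wSet μ x) :=
  ⟨0, fun ε hε => hε.1.le⟩

lemma witness_nonneg (μ : ProbabilityMeasure X) (x : X) : 0 ≤ witness μ x :=
  Real.sInf_nonneg (fun _ hε => hε.1.le)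

lemma witness_le (μ : ProbabilityMeasure X) {x : X} {ε : ℝ} (hε : 0 < ε)
    (h : ENNReal.ofReal (1 - ε) ≤ (μ : Measure X) (ball x ε)) : witness μ x ≤ ε := by
  rw [witness_eq]
  apply csInf_le (wSet_bddBelow μ x)
  refine ⟨hε, fun A hA => ?_⟩
  by_cases hx : x ∈ A
  · rw [Measure.dirac_apply_of_mem hx]
    rcases le_or_gt ε 1 with h1 | h1
    · calc (1:ℝ≥0∞) = ENNReal.ofReal (1-ε) + ENNReal.ofReal ε := by
            rw [← ENNReal.ofReal_add (by linarith) hε.le]; norm_num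
        _ ≤ _ := add_le_add (h.trans (measure_mono (ball_subset_thickening hx ε))) le_rfl
    · calc (1:ℝ≥0∞) ≤ ENNReal.ofReal ε := by
            rw [show (1:ℝ≥0∞) = ENNReal.ofReal 1 by simp]
            exact ENNReal.ofReal_le_ofReal h1.le
        _ ≤ _ := le_add_left le_rfl
  · rw [Measure.dirac_apply' _ hA, Set.indicator_of_notMem hx]
    exact zero_le

lemma ball_of_witness_lt (μ : ProbabilityMeasure X) {x : X} {ε : ℝ} (h : witness μ x < ε) :
    ENNReal.ofReal (1 - ε) ≤ (μ : Measure X) (ball x ε) := by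
  rcases le_or_gt ε 1 with hε1 | hε1
  swap
  · rw [ENNReal.ofReal_eq_zero.2 (by linarith)]; exact zero_le
  rw [witness_eq] at h
  obtain ⟨ε', hε'S, hlt⟩ := exists_lt_of_csInf_lt ⟨2, two_mem_wSet μ x⟩ h
  have h1 := hε'S.2 {x} (measurableSet_singleton x)
  rw [Measure.dirac_apply_of_mem (mem_singleton x), thickening_singleton] at h1
  have h2 : ENNReal.ofReal (1 - ε) ≤ (1:ℝ≥0∞) - ENNReal.ofReal ε' := by
    rw [show (1:ℝ≥0∞) = ENNReal.ofReal 1 by simp, ← ENNReal.ofReal_sub 1 hε'S.1.le]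
    exact ENNReal.ofReal_le_ofReal (by linarith)
  calc ENNReal.ofReal (1-ε) ≤ 1 - ENNReal.ofReal ε' := h2
    _ ≤ (μ : Measure X) (ball x ε') := tsub_le_iff_right.2 h1
    _ ≤ _ := measure_mono (ball_subset_ball hlt.le)

lemma witness_ge (μ : ProbabilityMeasure X) {x : X} {t : ℝ}
    (h : ∀ ε : ℝ, 0 < ε → ε < t → (μ : Measure X) (ball x ε) < ENNReal.ofReal (1 - ε)) :
    t ≤ witness μ x := by
  rcases le_or_gt t 0 with h0 | h0
  · exact h0.trans (witness_nonneg μ x)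
  by_contra hc
  push_neg at hc
  set ε := (max (witness μ x) 0 + t) / 2 with hεdef
  have hmax : max (witness μ x) 0 < t := max_lt hc h0
  have hε0 : 0 < ε := by
    have : (0:ℝ) ≤ max (witness μ x) 0 := le_max_right _ _
    simp only [hεdef]; linarith
  have hεt : ε < t := by simp only [hεdef]; linarith
  have hwε : witness μ x < ε := by
    have : witness μ x ≤ max (witness μ x) 0 := le_max_left _ _
    simp only [hεdef]; linarith
  exact absurd (ball_of_witness_lt μ hwε) (not_le.2 (h ε hε0 hεt))

lemma meas_closedBall_ge (ν : ProbabilityMeasure X) {x : X} {t : ℝ}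
    (h : witness ν x ≤ t) :
    ENNReal.ofReal (1 - t) ≤ (ν : Measure X) (closedBall x t) := by
  have hseq : ∀ n : ℕ, ENNReal.ofReal (1 - (t + 1/(n+1))) ≤ (ν : Measure X) (ball x (t + 1/(n+1))) := by
    intro n
    apply ball_of_witness_lt
    have : (0:ℝ) < 1/(n+1) := by positivity
    linarith
  have hcb : closedBall x t = ⋂ n : ℕ, ball x (t + 1/(n+1)) := by
    ext y
    simp only [mem_closedBall, mem_iInter, mem_ball]
    constructor
    · intro h n
      have : (0:ℝ) < 1/(n+1) := by positivity
      linarith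
    · intro hy
      by_contra hlt
      push_neg at hlt
      obtain ⟨n, hn⟩ := exists_nat_one_div_lt (show 0 < dist y x - t by linarith)
      have := hy n
      have hc : (1:ℝ)/(n+1) < dist y x - t := by exact_mod_cast hn
      linarith
  have hmono : Antitone (fun n : ℕ => ball x (t + 1/(n+1))) := by
    intro m n hmn
    apply ball_subset_ball
    have h1 : (1:ℝ)/(n+1) ≤ 1/(m+1) := by
      apply one_div_le_one_div_of_le
      · positivity
      · exact_mod_cast Nat.succ_le_succ hmn
    linarith
  have htend : Tendsto (fun n : ℕ => (ν : Measure X) (ball x (t + 1/(n+1)))) atTop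
      (nhds ((ν : Measure X) (⋂ n : ℕ, ball x (t + 1/(n+1))))) :=
    tendsto_measure_iInter_atTop (fun n => measurableSet_ball.nullMeasurableSet) hmono
      ⟨0, measure_ne_top _ _⟩
  have hreal : Tendsto (fun n : ℕ => (1 - (t + 1/(n+1)))) atTop (nhds (1 - t)) := by
    have h0 : Tendsto (fun n : ℕ => 1/((n:ℝ)+1)) atTop (nhds 0) :=
      tendsto_one_div_add_atTop_nhds_zero_nat
    have h2 := (tendsto_const_nhds (x := (1 - t : ℝ)) (f := atTop (α := ℕ))).sub h0
    have h3 : (fun n : ℕ => (1 - (t + 1/(n+1)))) = (fun n : ℕ => (1 - t) - 1/((n:ℝ)+1)) := by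
      funext n; ring
    rw [h3]
    simpa using h2
  have hofc : Tendsto (fun n : ℕ => ENNReal.ofReal (1 - (t + 1/(n+1)))) atTop
      (nhds (ENNReal.ofReal (1-t))) := ENNReal.tendsto_ofReal hreal
  rw [hcb]
  exact le_of_tendsto_of_tendsto' hofc htend hseq

lemma meas_ball_le (ν : ProbabilityMeasure X) {x : X} {t : ℝ}
    (h : t ≤ witness ν x) :
    (ν : Measure X) (ball x t) ≤ ENNReal.ofReal (1 - t) := by
  have hseq : ∀ n : ℕ, (ν : Measure X) (ball x (t - 1/(n+1))) ≤ ENNReal.ofReal (1 - (t - 1/(n+1))) := by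
    intro n
    rcases le_or_gt (t - 1/(n+1)) 0 with h0 | h0
    · rw [ball_eq_empty.2 h0]
      simp
    · by_contra hc
      push_neg at hc
      have := witness_le ν h0 hc.le
      have hlt : (0:ℝ) < 1/(n+1) := by positivity
      linarith
  have hb : ball x t = ⋃ n : ℕ, ball x (t - 1/(n+1)) := by
    ext y
    simp only [mem_ball, mem_iUnion]
    constructor
    · intro hy
      obtain ⟨n, hn⟩ := exists_nat_one_div_lt (show 0 < t - dist y x by linarith)
      refine ⟨n, ?_⟩
      have hc : (1:ℝ)/(n+1) < t - dist y x := by exact_mod_cast hn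
      linarith
    · rintro ⟨n, hn⟩
      have : (0:ℝ) < 1/(n+1) := by positivity
      linarith
  have hmono : Monotone (fun n : ℕ => ball x (t - 1/(n+1))) := by
    intro m n hmn
    apply ball_subset_ball
    have h1 : (1:ℝ)/(n+1) ≤ 1/(m+1) := by
      apply one_div_le_one_div_of_le
      · positivity
      · exact_mod_cast Nat.succ_le_succ hmn
    linarith
  have htend : Tendsto (fun n : ℕ => (ν : Measure X) (ball x (t - 1/(n+1)))) atTop
      (nhds ((ν : Measure X) (⋃ n : ℕ, ball x (t - 1/(n+1))))) :=
    tendsto_measure_iUnion_atTop hmono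
  have hreal : Tendsto (fun n : ℕ => (1 - (t - 1/(n+1)))) atTop (nhds (1 - t)) := by
    have h0 : Tendsto (fun n : ℕ => 1/((n:ℝ)+1)) atTop (nhds 0) :=
      tendsto_one_div_add_atTop_nhds_zero_nat
    have h2 := (tendsto_const_nhds (x := (1 - t : ℝ)) (f := atTop (α := ℕ))).add h0
    have h3 : (fun n : ℕ => (1 - (t - 1/(n+1)))) = (fun n : ℕ => (1 - t) + 1/((n:ℝ)+1)) := by
      funext n; ring
    rw [h3]
    simpa using h2
  have hofc : Tendsto (fun n : ℕ => ENNReal.ofReal (1 - (t - 1/(n+1)))) atTop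
      (nhds (ENNReal.ofReal (1-t))) := ENNReal.tendsto_ofReal hreal
  rw [hb]
  exact le_of_tendsto_of_tendsto' htend hofc hseq

lemma annulus_meas (ν : ProbabilityMeasure X) {x₁ x₂ : X} {t₁ t₂ : ℝ} (ht₂ : t₂ ≤ 1)
    (h1 : ENNReal.ofReal (1 - t₁) ≤ (ν : Measure X) (closedBall x₁ t₁))
    (h2 : (ν : Measure X) (ball x₂ t₂) ≤ ENNReal.ofReal (1 - t₂)) :
    ENNReal.ofReal (t₂ - t₁) ≤ (ν : Measure X) (closedBall x₁ t₁ \ ball x₂ t₂) := by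
  have hsub : closedBall x₁ t₁ ⊆ (closedBall x₁ t₁ \ ball x₂ t₂) ∪ ball x₂ t₂ := by
    intro y hy
    by_cases hb : y ∈ ball x₂ t₂
    · exact Or.inr hb
    · exact Or.inl ⟨hy, hb⟩
  have hch : ENNReal.ofReal (1 - t₁) ≤ (ν : Measure X) (closedBall x₁ t₁ \ ball x₂ t₂) + ENNReal.ofReal (1 - t₂) := by
    calc ENNReal.ofReal (1 - t₁) ≤ (ν : Measure X) (closedBall x₁ t₁) := h1
      _ ≤ (ν : Measure X) ((closedBall x₁ t₁ \ ball x₂ t₂) ∪ ball x₂ t₂) := measure_mono hsub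
      _ ≤ (ν : Measure X) (closedBall x₁ t₁ \ ball x₂ t₂) + (ν : Measure X) (ball x₂ t₂) :=
          measure_union_le _ _
      _ ≤ _ := add_le_add le_rfl h2
  have hkey : ENNReal.ofReal (1 - t₁) - ENNReal.ofReal (1 - t₂) ≤ (ν : Measure X) (closedBall x₁ t₁ \ ball x₂ t₂) :=
    tsub_le_iff_right.2 hch
  calc ENNReal.ofReal (t₂ - t₁) = ENNReal.ofReal ((1 - t₁) - (1 - t₂)) := by ring_nf
    _ = ENNReal.ofReal (1 - t₁) - ENNReal.ofReal (1 - t₂) := ENNReal.ofReal_sub _ (by linarith)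
    _ ≤ _ := hkey

end WitnessBasic

section Geometry

variable {X : Type*} [NormedAddCommGroup X] [NormedSpace ℝ X]

lemma norm_smul_nn (c : ℝ) (hc : 0 ≤ c) (z : X) : ‖c • z‖ = c * ‖z‖ := by
  rw [norm_smul, Real.norm_of_nonneg hc]

lemma line_lip (z w : X) (s t : ℝ) : ‖z + t • w‖ ≤ ‖z + s • w‖ + |t - s| * ‖w‖ := by
  have h : z + t • w = (z + s • w) + (t - s) • w := by rw [sub_smul]; abel
  rw [h]
  calc ‖(z + s • w) + (t - s) • w‖ ≤ ‖z + s • w‖ + ‖(t-s) • w‖ := norm_add_le _ _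
    _ = ‖z + s • w‖ + |t - s| * ‖w‖ := by rw [norm_smul, Real.norm_eq_abs]

lemma secant_ge (v w : X) {s₁ s₂ σ : ℝ} (h12 : s₁ < s₂) (h2σ : s₂ ≤ σ)
    (h₁ : ‖v + s₁ • w‖ ≤ s₁) (h₂ : s₂ ≤ ‖v + s₂ • w‖) : σ ≤ ‖v + σ • w‖ := by
  rcases eq_or_lt_of_le h2σ with rfl | hlt
  · exact h₂
  have key : (σ - s₁) • (v + s₂ • w) = (σ - s₂) • (v + s₁ • w) + (s₂ - s₁) • (v + σ • w) := by
    module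
  have hn : (σ - s₁) * ‖v + s₂ • w‖ ≤ (σ - s₂) * ‖v + s₁ • w‖ + (s₂ - s₁) * ‖v + σ • w‖ := by
    calc (σ - s₁) * ‖v + s₂ • w‖ = ‖(σ - s₁) • (v + s₂ • w)‖ := by
          rw [norm_smul_nn _ (by linarith)]
      _ ≤ ‖(σ - s₂) • (v + s₁ • w)‖ + ‖(s₂ - s₁) • (v + σ • w)‖ := by
          rw [key]; exact norm_add_le _ _
      _ = (σ - s₂) * ‖v + s₁ • w‖ + (s₂ - s₁) * ‖v + σ • w‖ := by
          rw [norm_smul_nn _ (by linarith), norm_smul_nn _ (by linarith)]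
  nlinarith [h₂, h₁, norm_nonneg (v + σ • w)]

/-- The key geometric "kill" lemma. -/
lemma kill_lemma (u ζ : X) (d a : ℝ)
    (hu : ‖u‖ = 1) (hd : 0 < d) (ha : 0 < a) (ha1 : a < 1) (hζ : ζ ≠ 0)
    (H : ∀ σ : ℝ, a < σ → σ < 1 → ‖ζ + σ • u‖ = σ) :
    ∃ w : X, ‖w‖ = 1 ∧ (∀ s : ℝ, 0 ≤ s → ‖d • u + s • w‖ = d + s) ∧
      ∃ γ : ℝ, 0 < γ ∧ ∀ s : ℝ, 0 < s → s ≤ 1 → s + γ ≤ ‖ζ + s • w‖ := by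
  have hr : 0 < ‖ζ‖ := norm_pos_iff.2 hζ
  have Hfull : ∀ σ : ℝ, a < σ → ‖ζ + σ • u‖ = σ := by
    intro σ hσ
    rcases lt_or_ge σ 1 with h1 | h1
    · exact H σ hσ h1
    · have e₁ : ‖ζ + ((2*a+1)/3) • u‖ = (2*a+1)/3 := H _ (by linarith) (by linarith)
      have e₂ : ‖ζ + ((a+2)/3) • u‖ = (a+2)/3 := H _ (by linarith) (by linarith)
      have hge : σ ≤ ‖ζ + σ • u‖ :=
        secant_ge ζ u (by linarith : (2*a+1)/3 < (a+2)/3) (by linarith) e₁.le e₂.ge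
      have hle : ‖ζ + σ • u‖ ≤ σ := by
        have := line_lip ζ u ((a+2)/3) σ
        rw [e₂, hu, abs_of_nonneg (by linarith : (0:ℝ) ≤ σ - (a+2)/3)] at this
        linarith
      linarith
  set g : ℝ → ℝ := fun x => ‖u + x • ζ‖ with hgdef
  have hg0 : g 0 = 1 := by simp [hgdef, hu]
  have hgsmall : ∀ x : ℝ, 0 ≤ x → x * a < 1 → g x = 1 := by
    intro x hx0 hxa
    rcases eq_or_lt_of_le hx0 with rfl | hx
    · exact hg0
    have hid : u + x • ζ = x • (ζ + x⁻¹ • u) := by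
      rw [smul_add, smul_smul, mul_inv_cancel₀ hx.ne', one_smul]; abel
    have hinv : a < x⁻¹ := by
      rw [← one_div]
      rw [lt_div_iff₀ hx]
      nlinarith
    have hmain : ‖ζ + x⁻¹ • u‖ = x⁻¹ := Hfull _ hinv
    show ‖u + x • ζ‖ = 1
    rw [hid, norm_smul_nn x hx.le, hmain, mul_inv_cancel₀ hx.ne']
  have hge1 : ∀ x : ℝ, 1 ≤ x → 1 ≤ g x := by
    intro x h1
    have hg1 : g 1 = 1 := hgsmall 1 zero_le_one (by linarith)
    have key : x • (u + (1:ℝ) • ζ) = (x - 1) • u + (u + x • ζ) := by module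
    have h2 : x * 1 ≤ (x-1) * 1 + g x := by
      calc x * 1 = x * g 1 := by rw [hg1]
        _ = ‖x • (u + (1:ℝ) • ζ)‖ := by
            rw [show g 1 = ‖u + (1:ℝ) • ζ‖ from rfl, ← norm_smul_nn x (by linarith)]
        _ ≤ ‖(x-1) • u‖ + ‖u + x • ζ‖ := by rw [key]; exact norm_add_le _ _
        _ = (x-1) * 1 + g x := by rw [norm_smul_nn _ (by linarith), hu]
    linarith
  set T : Set ℝ := {x : ℝ | 1 ≤ x} ∩ {x : ℝ | g x = 1} with hT
  have hg_cont : Continuous g := by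
    apply Continuous.norm
    exact continuous_const.add (continuous_id.smul continuous_const)
  have hTclosed : IsClosed T :=
    (isClosed_le continuous_const continuous_id).inter (isClosed_eq hg_cont continuous_const)
  have h1T : (1:ℝ) ∈ T := ⟨mem_setOf.2 le_rfl, mem_setOf.2 (hgsmall 1 zero_le_one (by linarith))⟩
  have hTbdd : BddAbove T := by
    refine ⟨2 / ‖ζ‖, fun x hx => ?_⟩
    have hx1 : (1:ℝ) ≤ x := hx.1
    have hgx : ‖u + x • ζ‖ = 1 := hx.2
    have h1 : ‖x • ζ‖ ≤ ‖u + x • ζ‖ + ‖u‖ := by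
      calc ‖x • ζ‖ = ‖(u + x • ζ) - u‖ := by congr 1; abel
        _ ≤ ‖u + x • ζ‖ + ‖u‖ := norm_sub_le _ _
    rw [norm_smul_nn x (show (0:ℝ) ≤ x by linarith) ζ, hgx, hu] at h1
    exact (le_div_iff₀ hr).2 (by linarith)
  set xs := sSup T with hxs
  have hxsT : xs ∈ T := hTclosed.csSup_mem ⟨1, h1T⟩ hTbdd
  have hxs1 : (1:ℝ) ≤ xs := hxsT.1
  have hgxs : g xs = 1 := hxsT.2
  have hflat : ∀ x : ℝ, 0 ≤ x → x ≤ xs → g x = 1 := by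
    intro x hx0 hxxs
    rcases lt_or_ge x 1 with h1 | h1
    · exact hgsmall x hx0 (by nlinarith)
    · have hlow : 1 ≤ g x := hge1 x h1
      have hup : g x ≤ 1 := by
        have hxs0 : (0:ℝ) < xs := by linarith
        have key : xs • (u + x • ζ) = (xs - x) • u + x • (u + xs • ζ) := by module
        have h2 : xs * g x ≤ (xs - x) * 1 + x * 1 := by
          calc xs * g x = ‖xs • (u + x • ζ)‖ := by rw [← norm_smul_nn _ hxs0.le]
            _ ≤ ‖(xs - x) • u‖ + ‖x • (u + xs • ζ)‖ := by rw [key]; exact norm_add_le _ _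
            _ = (xs - x) * 1 + x * g xs := by
                rw [norm_smul_nn _ (by linarith), hu, norm_smul_nn _ hx0]
            _ = (xs - x) * 1 + x * 1 := by rw [hgxs]
        nlinarith
      linarith
  set G := g (xs + 1) with hG
  have hG1 : 1 < G := by
    have hge : 1 ≤ G := hge1 _ (by linarith)
    rcases eq_or_lt_of_le hge with heq | h
    · exfalso
      have hmem : xs + 1 ∈ T := ⟨mem_setOf.2 (by linarith), mem_setOf.2 heq.symm⟩
      have := le_csSup hTbdd hmem
      linarith
    · exact h
  have hVne : u + (xs+1) • ζ ≠ 0 := by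
    intro h0
    have : G = 0 := by rw [hG, hgdef]; simp only; rw [h0, norm_zero]
    linarith
  obtain ⟨ψ, hψ1, hψV⟩ := exists_dual_vector ℝ (u + (xs+1) • ζ) (norm_ne_zero_iff.2 hVne)
  have hψle : ∀ z : X, ψ z ≤ ‖z‖ := by
    intro z
    calc ψ z ≤ |ψ z| := le_abs_self _
      _ = ‖ψ z‖ := (Real.norm_eq_abs _).symm
      _ ≤ ‖ψ‖ * ‖z‖ := ψ.le_opNorm z
      _ = ‖z‖ := by rw [hψ1, one_mul]
  set w : X := u + xs • ζ with hw
  have hwnorm : ‖w‖ = 1 := hflat xs (by linarith) le_rfl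
  have hVsplit : u + (xs+1) • ζ = w + ζ := by rw [hw]; module
  have hψVG : ψ (u + (xs+1) • ζ) = G := by
    have h : ψ (u + (xs+1) • ζ) = ‖u + (xs+1) • ζ‖ := by exact_mod_cast hψV
    rw [h]
  have hψw_le : ψ w ≤ 1 := (hψle w).trans_eq hwnorm
  have hψwζ : ψ w + ψ ζ = G := by rw [← map_add, ← hVsplit, hψVG]
  have hψζ : G - 1 ≤ ψ ζ := by linarith
  refine ⟨w, hwnorm, ?_, G - 1, by linarith, ?_⟩
  · intro s hs
    have hds : (0:ℝ) < d + s := by linarith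
    have hid : d • u + s • w = (d+s) • u + (s*xs) • ζ := by rw [hw]; module
    have hq : (d+s) * ((s*xs)/(d+s)) = s * xs := by field_simp
    have hid2 : (d+s) • u + (s*xs) • ζ = (d+s) • (u + ((s*xs)/(d+s)) • ζ) := by
      rw [smul_add, smul_smul, hq]
    have harg0 : 0 ≤ (s*xs)/(d+s) := by positivity
    have hargle : (s*xs)/(d+s) ≤ xs := by
      rw [div_le_iff₀ hds]
      nlinarith
    have hfl := hflat _ harg0 hargle
    rw [hid, hid2, norm_smul_nn _ hds.le]
    rw [show g ((s*xs)/(d+s)) = ‖u + ((s*xs)/(d+s)) • ζ‖ from rfl] at hfl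
    rw [hfl, mul_one]
  · intro s hs0 hs1
    have hψw : ψ w = G - ψ ζ := by linarith
    have hval : ψ (ζ + s • w) = ψ ζ + s * ψ w := by
      rw [map_add, ContinuousLinearMap.map_smul, smul_eq_mul]
    have hkey : s + (G - 1) ≤ ψ (ζ + s • w) := by
      rw [hval, hψw]
      have hmul : (1 - s) * (G - 1) ≤ (1 - s) * ψ ζ :=
        mul_le_mul_of_nonneg_left hψζ (by linarith)
      nlinarith
    exact hkey.trans (hψle _)

end Geometry

section ZSetSec

variable {X : Type*} [NormedAddCommGroup X] [NormedSpace ℝ X] [MeasurableSpace X] [BorelSpace X]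

/-- The pinch set along a ray. -/
def ZSet (x₀ w : X) (α : ℝ) (e : ℕ → ℝ) : Set X :=
  ⋂ n : ℕ, (closedBall (x₀ - (α + e n) • w) (α + e n) \ ball (x₀ - (1 - e n) • w) (1 - e n))

lemma ZSet_measurable (x₀ w : X) (α : ℝ) (e : ℕ → ℝ) : MeasurableSet (ZSet x₀ w α e) :=
  MeasurableSet.iInter fun _ => measurableSet_closedBall.diff measurableSet_ball

lemma mem_cball_iff (x₀ w z : X) (s r : ℝ) :
    z ∈ closedBall (x₀ - s • w) r ↔ ‖(z - x₀) + s • w‖ ≤ r := by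
  rw [mem_closedBall, dist_eq_norm, show z - (x₀ - s • w) = (z - x₀) + s • w by abel]

lemma mem_oball_iff (x₀ w z : X) (s r : ℝ) :
    z ∈ ball (x₀ - s • w) r ↔ ‖(z - x₀) + s • w‖ < r := by
  rw [mem_ball, dist_eq_norm, show z - (x₀ - s • w) = (z - x₀) + s • w by abel]

lemma ZSet_struct {x₀ w : X} {α : ℝ} {e : ℕ → ℝ} (hw : ‖w‖ = 1)
    (he_small : ∀ δ : ℝ, 0 < δ → ∃ n, e n < δ)
    {y : X} (hy : y ∈ ZSet x₀ w α e) :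
    ∀ σ : ℝ, α < σ → σ < 1 → ‖(y - x₀) + σ • w‖ = σ := by
  intro σ hσ1 hσ2
  obtain ⟨n, hn⟩ := he_small (min (σ - α) (1 - σ)) (lt_min (by linarith) (by linarith))
  have hn1 : e n < σ - α := hn.trans_le (min_le_left _ _)
  have hn2 : e n < 1 - σ := hn.trans_le (min_le_right _ _)
  have hy' := mem_iInter.1 hy n
  have h1 : ‖(y - x₀) + (α + e n) • w‖ ≤ α + e n := (mem_cball_iff _ _ _ _ _).1 hy'.1
  have h2 : 1 - e n ≤ ‖(y - x₀) + (1 - e n) • w‖ := by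
    have h2' : ¬ (‖(y - x₀) + (1 - e n) • w‖ < 1 - e n) :=
      fun hlt => hy'.2 ((mem_oball_iff _ _ _ _ _).2 hlt)
    linarith [not_lt.1 h2']
  have hup : ‖(y - x₀) + σ • w‖ ≤ σ := by
    have := line_lip (y - x₀) w (α + e n) σ
    rw [hw, mul_one, abs_of_nonneg (by linarith)] at this
    linarith
  have hdown : σ ≤ ‖(y - x₀) + σ • w‖ := by
    have := line_lip (y - x₀) w σ (1 - e n)
    rw [hw, mul_one, abs_of_nonneg (by linarith)] at this
    linarith
  linarith

lemma ZSet_meas_ge (ν : ProbabilityMeasure X) {x₀ w : X} {α : ℝ} {e : ℕ → ℝ} (hw : ‖w‖ = 1)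
    (hepos : ∀ n, 0 < e n) (healpha : ∀ n, α + e n < 1)
    (heanti : Antitone e) (he0 : Tendsto e atTop (nhds 0))
    (hwit1 : ∀ n, witness ν (x₀ - (α + e n) • w) ≤ α + e n)
    (hwit2 : ∀ n, 1 - e n ≤ witness ν (x₀ - (1 - e n) • w)) :
    ENNReal.ofReal (1 - α) ≤ (ν : Measure X) (ZSet x₀ w α e) := by
  have hbound : ∀ n, ENNReal.ofReal ((1 - e n) - (α + e n)) ≤
      (ν : Measure X) (closedBall (x₀ - (α + e n) • w) (α + e n) \ ball (x₀ - (1 - e n) • w) (1 - e n)) := by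
    intro n
    apply annulus_meas ν (by linarith [hepos n])
    · exact meas_closedBall_ge ν (hwit1 n)
    · exact meas_ball_le ν (hwit2 n)
  have hanti : Antitone (fun n => closedBall (x₀ - (α + e n) • w) (α + e n) \ ball (x₀ - (1 - e n) • w) (1 - e n)) := by
    intro m n hmn
    have hemn : e n ≤ e m := heanti hmn
    apply diff_subset_diff
    · intro z hz
      rw [mem_cball_iff] at hz ⊢
      have := line_lip (z - x₀) w (α + e n) (α + e m)
      rw [hw, mul_one, abs_of_nonneg (by linarith)] at this
      linarith
    · intro z hz
      rw [mem_oball_iff] at hz ⊢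
      have := line_lip (z - x₀) w (1 - e m) (1 - e n)
      rw [hw, mul_one, abs_of_nonneg (by linarith)] at this
      linarith
  have htend := tendsto_measure_iInter_atTop (μ := (ν : Measure X))
      (fun n => (measurableSet_closedBall.diff measurableSet_ball).nullMeasurableSet) hanti
      ⟨0, measure_ne_top _ _⟩
  have hreal : Tendsto (fun n => ((1 - e n) - (α + e n))) atTop (nhds (1 - α)) := by
    have h2 := ((tendsto_const_nhds (x := (1:ℝ)) (f := atTop (α := ℕ))).sub he0).sub
      ((tendsto_const_nhds (x := α) (f := atTop (α := ℕ))).add he0)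
    simpa using h2
  exact le_of_tendsto_of_tendsto' (ENNReal.tendsto_ofReal hreal) htend hbound

end ZSetSec

section Main

variable {X : Type*} [NormedAddCommGroup X] [NormedSpace ℝ X]
  [SeparableSpace X] [MeasurableSpace X] [BorelSpace X]

lemma atom_mass (μ ν : ProbabilityMeasure X) (p q : X) (a b : ℝ)
    (hab : a + b = 1) (ha : 0 < a) (hb : 0 < b) (hpq : p ≠ q)
    (hrep : (μ : Measure X) = ENNReal.ofReal a • Measure.dirac p + ENNReal.ofReal b • Measure.dirac q)
    (hW : ∀ x : X, witness μ x = witness ν x) :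
    ENNReal.ofReal b ≤ (ν : Measure X) {q} := by
  have ha1 : a < 1 := by linarith
  have hb1 : b < 1 := by linarith
  set d : ℝ := ‖p - q‖ with hd_def
  have hd : 0 < d := by rw [hd_def]; exact norm_pos_iff.2 (sub_ne_zero.2 hpq)
  set u : X := d⁻¹ • (p - q) with hu_def
  have hu : ‖u‖ = 1 := by
    rw [hu_def, norm_smul_nn _ (by positivity), ← hd_def]
    field_simp
  have hdu : d • u = p - q := by
    rw [hu_def, smul_smul, mul_inv_cancel₀ hd.ne', one_smul]
  have hμq : ∀ s : Set X, q ∈ s → ENNReal.ofReal b ≤ (μ : Measure X) s := by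
    intro s hs
    rw [hrep]
    calc ENNReal.ofReal b = ENNReal.ofReal b * Measure.dirac q s := by
          rw [Measure.dirac_apply_of_mem hs, mul_one]
      _ ≤ ENNReal.ofReal a * Measure.dirac p s + ENNReal.ofReal b * Measure.dirac q s :=
          le_add_left le_rfl
      _ = _ := by
          rw [Measure.add_apply, Measure.smul_apply, Measure.smul_apply, smul_eq_mul, smul_eq_mul]
  have hμp : ∀ s : Set X, p ∈ s → ENNReal.ofReal a ≤ (μ : Measure X) s := by
    intro s hs
    rw [hrep]
    calc ENNReal.ofReal a = ENNReal.ofReal a * Measure.dirac p s := by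
          rw [Measure.dirac_apply_of_mem hs, mul_one]
      _ ≤ ENNReal.ofReal a * Measure.dirac p s + ENNReal.ofReal b * Measure.dirac q s :=
          le_self_add
      _ = _ := by
          rw [Measure.add_apply, Measure.smul_apply, Measure.smul_apply, smul_eq_mul, smul_eq_mul]
  have hμ0 : ∀ s : Set X, MeasurableSet s → p ∉ s → q ∉ s → (μ : Measure X) s = 0 := by
    intro s hms hp hq
    rw [hrep, Measure.add_apply, Measure.smul_apply, Measure.smul_apply,
      Measure.dirac_apply' _ hms, Measure.dirac_apply' _ hms,
      Set.indicator_of_notMem hp, Set.indicator_of_notMem hq]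
    simp
  have hdist_qc : ∀ (w : X) (s : ℝ), 0 ≤ s → ‖w‖ = 1 → dist q (q - s • w) = s := by
    intro w s hs hw
    rw [dist_eq_norm, show q - (q - s • w) = s • w by abel, norm_smul_nn _ hs, hw, mul_one]
  have hdist_pc : ∀ (w : X) (s : ℝ), dist p (q - s • w) = ‖d • u + s • w‖ := by
    intro w s
    rw [dist_eq_norm, show p - (q - s • w) = (p - q) + s • w by abel, ← hdu]
  have W1q : ∀ (w : X) (s : ℝ), ‖w‖ = 1 → a < s → witness μ (q - s • w) ≤ s := by
    intro w s hw has
    have hs0 : 0 < s := lt_trans ha has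
    by_contra hc
    push_neg at hc
    set ε := (s + witness μ (q - s • w))/2 with hε_def
    have hsε : s < ε := by simp only [hε_def]; linarith
    have hεw : ε < witness μ (q - s • w) := by simp only [hε_def]; linarith
    have hq_in : q ∈ ball (q - s • w) ε := by
      rw [mem_ball, hdist_qc w s hs0.le hw]; linarith
    have hball : ENNReal.ofReal (1 - ε) ≤ (μ : Measure X) (ball (q - s • w) ε) :=
      le_trans (ENNReal.ofReal_le_ofReal (by linarith)) (hμq _ hq_in)
    have := witness_le μ (by linarith : (0:ℝ) < ε) hball
    linarith
  have W2q : ∀ (w : X) (s : ℝ), ‖w‖ = 1 → 0 < s → s ≤ 1 → s ≤ ‖d • u + s • w‖ →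
      s ≤ witness μ (q - s • w) := by
    intro w s hw hs0 hs1 hval
    apply witness_ge
    intro ε hε0 hεs
    have h0 : (μ : Measure X) (ball (q - s • w) ε) = 0 := by
      apply hμ0 _ measurableSet_ball
      · rw [mem_ball, hdist_pc w s]; push_neg; linarith
      · rw [mem_ball, hdist_qc w s hs0.le hw]; push_neg; linarith
    rw [h0]
    exact ENNReal.ofReal_pos.2 (by linarith)
  have hdist_pc' : ∀ (s : ℝ), 0 ≤ s → dist p (p - s • (-u)) = s := by
    intro s hs
    rw [dist_eq_norm, show p - (p - s • (-u)) = s • (-u) by abel, norm_smul_nn _ hs,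
      norm_neg, hu, mul_one]
  have hdist_qc' : ∀ (s : ℝ), 0 ≤ s → dist q (p - s • (-u)) = d + s := by
    intro s hs
    have hvec : q - (p - s • (-u)) = -((d + s) • u) := by
      rw [add_smul d s u, hdu]; module
    rw [dist_eq_norm, hvec, norm_neg, norm_smul_nn _ (by linarith), hu, mul_one]
  have W1p : ∀ (s : ℝ), b < s → witness μ (p - s • (-u)) ≤ s := by
    intro s hbs
    have hs0 : 0 < s := lt_trans hb hbs
    by_contra hc
    push_neg at hc
    set ε := (s + witness μ (p - s • (-u)))/2 with hε_def
    have hsε : s < ε := by simp only [hε_def]; linarith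
    have hεw : ε < witness μ (p - s • (-u)) := by simp only [hε_def]; linarith
    have hp_in : p ∈ ball (p - s • (-u)) ε := by
      rw [mem_ball, hdist_pc' s hs0.le]; linarith
    have hball : ENNReal.ofReal (1 - ε) ≤ (μ : Measure X) (ball (p - s • (-u)) ε) :=
      le_trans (ENNReal.ofReal_le_ofReal (by linarith)) (hμp _ hp_in)
    have := witness_le μ (by linarith : (0:ℝ) < ε) hball
    linarith
  have W2p : ∀ (s : ℝ), 0 < s → s ≤ 1 → s ≤ witness μ (p - s • (-u)) := by
    intro s hs0 hs1
    apply witness_ge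
    intro ε hε0 hεs
    have h0 : (μ : Measure X) (ball (p - s • (-u)) ε) = 0 := by
      apply hμ0 _ measurableSet_ball
      · rw [mem_ball, hdist_pc' s hs0.le]; push_neg; linarith
      · rw [mem_ball, hdist_qc' s hs0.le]; push_neg; linarith
    rw [h0]
    exact ENNReal.ofReal_pos.2 (by linarith)
  -- main estimate for each small c
  have key : ∀ c : ℝ, 0 < c → 2*c < b → c < a → ENNReal.ofReal (b - c) ≤ (ν : Measure X) {q} := by
    intro c hc0 hcb hca
    set e : ℕ → ℝ := fun n => c / 2^n with he_def
    have he_pos : ∀ n, 0 < e n := by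
      intro n; simp only [he_def]; positivity
    have he_le : ∀ n, e n ≤ c := by
      intro n
      simp only [he_def]
      apply div_le_self hc0.le
      exact one_le_pow₀ (by norm_num)
    have he_anti : Antitone e := by
      intro m n hmn
      simp only [he_def]
      apply div_le_div_of_nonneg_left hc0.le (by positivity)
      exact pow_le_pow_right₀ (by norm_num) hmn
    have he_half : ∀ n, e (n+1) + e (n+1) = e n := by
      intro n
      have h2n : (2:ℝ)^n ≠ 0 := by positivity
      simp only [he_def, pow_succ]
      field_simp
      ring
    have he0 : Tendsto e atTop (nhds 0) := by
      have hpow : Tendsto (fun n : ℕ => (1/2 : ℝ)^n) atTop (nhds 0) :=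
        tendsto_pow_atTop_nhds_zero_of_lt_one (by norm_num) (by norm_num)
      have h2 := hpow.const_mul c
      have h3 : (fun n : ℕ => c * (1/2:ℝ)^n) = e := by
        funext n
        simp only [he_def, div_pow, one_pow]
        ring
      rw [h3] at h2
      simpa using h2
    have he_small : ∀ δ : ℝ, 0 < δ → ∃ n, e n < δ := by
      intro δ hδ
      exact (he0.eventually_lt_const hδ).exists
    have healpha_q : ∀ n, a + e n < 1 := fun n => by have := he_le n; linarith
    have healpha_p : ∀ n, b + e n < 1 := fun n => by have h1 := he_le n; linarith
    set Zq := ZSet q u a e with hZq_def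
    set Zp := ZSet p (-u) b e with hZp_def
    have hnu : ‖(-u : X)‖ = 1 := by rw [norm_neg, hu]
    have hZqν : ENNReal.ofReal (1 - a) ≤ (ν : Measure X) Zq := by
      apply ZSet_meas_ge ν hu he_pos healpha_q he_anti he0
      · intro n
        rw [← hW]
        exact W1q u (a + e n) hu (by linarith [he_pos n])
      · intro n
        rw [← hW]
        apply W2q u (1 - e n) hu (by linarith [he_le n, he_pos n]) (by linarith [he_pos n])
        rw [show d • u + (1 - e n) • u = (d + (1 - e n)) • u by module,
          norm_smul_nn _ (by linarith [he_le n]), hu, mul_one]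
        linarith
    have hZpν : ENNReal.ofReal (1 - b) ≤ (ν : Measure X) Zp := by
      apply ZSet_meas_ge ν hnu he_pos healpha_p he_anti he0
      · intro n
        rw [← hW]
        exact W1p (b + e n) (by linarith [he_pos n])
      · intro n
        rw [← hW]
        exact W2p (1 - e n) (by linarith [he_le n, he_pos n]) (by linarith [he_pos n])
    have hZq_struct : ∀ y ∈ Zq, ∀ σ, a < σ → σ < 1 → ‖(y - q) + σ • u‖ = σ :=
      fun y hy => ZSet_struct hu he_small hy
    have hZp_struct : ∀ y ∈ Zp, ∀ t, b < t → t < 1 → ‖(y - p) + t • (-u)‖ = t :=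
      fun y hy => ZSet_struct hnu he_small hy
    have hdisjZ : ∀ y ∈ Zq, y ∉ Zp := by
      intro y hyq hyp
      have h1 := hZq_struct y hyq ((a+1)/2) (by linarith) (by linarith)
      have h2 := hZp_struct y hyp ((b+1)/2) (by linarith) (by linarith)
      have hvec : ((y - q) + ((a+1)/2) • u) - ((y - p) + ((b+1)/2) • (-u))
          = (d + ((a+1)/2 + (b+1)/2)) • u := by
        rw [add_smul d ((a+1)/2 + (b+1)/2) u, hdu]; module
      have hnorm : d + ((a+1)/2 + (b+1)/2) ≤ (a+1)/2 + (b+1)/2 := by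
        calc d + ((a+1)/2 + (b+1)/2)
            = ‖(d + ((a+1)/2 + (b+1)/2)) • u‖ := by
              rw [norm_smul_nn _ (by linarith), hu, mul_one]
          _ = ‖((y - q) + ((a+1)/2) • u) - ((y - p) + ((b+1)/2) • (-u))‖ := by rw [hvec]
          _ ≤ ‖(y - q) + ((a+1)/2) • u‖ + ‖(y - p) + ((b+1)/2) • (-u)‖ := norm_sub_le _ _
          _ = (a+1)/2 + (b+1)/2 := by rw [h1, h2]
      linarith
    set s₀ : ℝ := a + c with hs₀_def
    have hs₀a : a < s₀ := by simp only [hs₀_def]; linarith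
    have hs₀1 : s₀ < 1 := by simp only [hs₀_def]; linarith
    set V : Set X := {w : X | ‖w‖ = 1 ∧ ‖d • u + s₀ • w‖ = d + s₀} with hV_def
    have huV : u ∈ V := by
      rw [hV_def]
      refine mem_setOf.2 ⟨hu, ?_⟩
      rw [show d • u + s₀ • u = (d + s₀) • u by module, norm_smul_nn _ (by linarith), hu, mul_one]
    obtain ⟨D, hDV, hDcount, hDdense⟩ :=
      (TopologicalSpace.IsSeparable.of_separableSpace V).exists_countable_dense_subset
    have hDne : D.Nonempty := by
      rcases D.eq_empty_or_nonempty with rfl | h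
      · exfalso
        have := hDdense huV
        simp at this
      · exact h
    obtain ⟨f, hfD⟩ := hDcount.exists_eq_range hDne
    have hfV : ∀ j, ‖f j‖ = 1 ∧ ‖d • u + s₀ • f j‖ = d + s₀ := by
      intro j
      have : f j ∈ V := hDV (hfD ▸ mem_range_self j)
      rw [hV_def] at this
      exact mem_setOf.1 this
    have hval : ∀ (j : ℕ) (s : ℝ), 0 ≤ s → s ≤ s₀ → d + s ≤ ‖d • u + s • f j‖ := by
      intro j s hs hss
      have hlip := line_lip (d • u) (f j) s s₀
      rw [(hfV j).1, mul_one, abs_of_nonneg (by linarith)] at hlip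
      have := (hfV j).2
      linarith
    set sj : ℕ → ℝ := fun j => a + e (j+1) with hsj_def
    have hsj_a : ∀ j, a < sj j := fun j => by
      simp only [hsj_def]; linarith [he_pos (j+1)]
    have hsj_s₀ : ∀ j, sj j ≤ s₀ := fun j => by
      simp only [hsj_def, hs₀_def]; linarith [he_le (j+1)]
    have hsj_1 : ∀ j, sj j < 1 := fun j => by
      have h1 := hsj_s₀ j; linarith
    set C : ℕ → Set X := fun j => closedBall (q - sj j • f j) (sj j) with hC_def
    have hCν : ∀ j, ENNReal.ofReal (1 - sj j) ≤ (ν : Measure X) (C j) := by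
      intro j
      apply meas_closedBall_ge
      rw [← hW]
      exact W1q (f j) (sj j) (hfV j).1 (hsj_a j)
    have hCZp : ∀ j, ∀ y ∈ C j, y ∉ Zp := by
      intro j y hyC hyZp
      set t : ℝ := (b+1)/2 with ht_def
      have ht0 : 0 < t := by simp only [ht_def]; linarith
      have hyt := hZp_struct y hyZp t (by simp only [ht_def]; linarith)
        (by simp only [ht_def]; linarith)
      have hyC' : ‖(y - q) + sj j • f j‖ ≤ sj j := (mem_cball_iff _ _ _ _ _).1 hyC
      have hvecB : ((y - q) + sj j • f j) - ((y - p) + t • (-u)) = (d + t) • u + sj j • f j := by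
        rw [add_smul d t u, hdu]; module
      have hB : ‖(d + t) • u + sj j • f j‖ ≤ sj j + t := by
        rw [← hvecB]
        calc ‖((y - q) + sj j • f j) - ((y - p) + t • (-u))‖
            ≤ ‖(y - q) + sj j • f j‖ + ‖(y - p) + t • (-u)‖ := norm_sub_le _ _
          _ ≤ sj j + t := by rw [hyt]; linarith
      have hkey : (d + t) • (d • u + sj j • f j)
          = t • (sj j • f j) + d • ((d + t) • u + sj j • f j) := by module
      have hA : d + sj j ≤ ‖d • u + sj j • f j‖ :=
        hval j (sj j) (by linarith [hsj_a j]) (hsj_s₀ j)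
      have hfin : (d + t) * (d + sj j) ≤ t * sj j + d * (sj j + t) := by
        calc (d + t) * (d + sj j) ≤ (d + t) * ‖d • u + sj j • f j‖ := by nlinarith
          _ = ‖(d + t) • (d • u + sj j • f j)‖ := by rw [norm_smul_nn _ (by linarith)]
          _ ≤ ‖t • (sj j • f j)‖ + ‖d • ((d + t) • u + sj j • f j)‖ := by
              rw [hkey]; exact norm_add_le _ _
          _ = t * (sj j * ‖f j‖) + d * ‖(d + t) • u + sj j • f j‖ := by
              rw [norm_smul_nn _ ht0.le, norm_smul_nn _ (by linarith [hsj_a j]),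
                norm_smul_nn _ hd.le]
          _ ≤ t * sj j + d * (sj j + t) := by
              rw [(hfV j).1, mul_one]
              have := mul_le_mul_of_nonneg_left hB hd.le
              linarith
      nlinarith
    have hZp_meas : MeasurableSet Zp := ZSet_measurable _ _ _ _
    have hZq_meas : MeasurableSet Zq := ZSet_measurable _ _ _ _
    have hZqCj : ∀ j, (ν : Measure X) (Zq \ C j) ≤ ENNReal.ofReal (e (j+1)) := by
      intro j
      have hsub : Zq \ C j ⊆ (C j ∪ Zp)ᶜ := by
        rintro y ⟨hyZ, hyC⟩
        simp only [mem_compl_iff, mem_union]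
        push_neg
        exact ⟨hyC, hdisjZ y hyZ⟩
      have hdisj2 : Disjoint (C j) Zp := by
        rw [Set.disjoint_left]
        exact fun {y} hy hyp => hCZp j y hy hyp
      have hmeas_u : MeasurableSet (C j ∪ Zp) := measurableSet_closedBall.union hZp_meas
      calc (ν : Measure X) (Zq \ C j) ≤ (ν : Measure X) ((C j ∪ Zp)ᶜ) := measure_mono hsub
        _ = 1 - (ν : Measure X) (C j ∪ Zp) := by
            rw [measure_compl hmeas_u (measure_ne_top _ _), measure_univ]
        _ ≤ 1 - ENNReal.ofReal ((1 - sj j) + (1 - b)) := by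
            apply tsub_le_tsub_left
            rw [measure_union hdisj2 hZp_meas,
              ENNReal.ofReal_add (by linarith [hsj_1 j]) (by linarith)]
            exact add_le_add (hCν j) hZpν
        _ = ENNReal.ofReal (e (j+1)) := by
            rw [show (1:ℝ≥0∞) = ENNReal.ofReal 1 by simp,
              ← ENNReal.ofReal_sub _ (by linarith [hsj_1 j])]
            congr 1
            have hsj_eq : sj j = a + e (j+1) := by simp only [hsj_def]
            linarith
    set Dn : ℕ → Set X := fun n => Zq ∩ ⋂ j ∈ Finset.range n, C j with hDn_def
    have hDn_meas : ∀ n, MeasurableSet (Dn n) := by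
      intro n
      apply hZq_meas.inter
      apply MeasurableSet.biInter (Finset.range n).countable_toSet
      exact fun j _ => measurableSet_closedBall
    have hDn_anti : Antitone Dn := by
      intro m n hmn
      apply inter_subset_inter_right
      intro y hy
      rw [mem_iInter₂] at hy ⊢
      exact fun j hj => hy j (Finset.mem_range.2 (lt_of_lt_of_le (Finset.mem_range.1 hj) hmn))
    have hDn_bound : ∀ n, ENNReal.ofReal b ≤ (ν : Measure X) (Dn n) + ENNReal.ofReal (c - e n) := by
      intro n
      induction n with
      | zero =>
        have hD0 : Dn 0 = Zq := by
          rw [hDn_def]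
          simp
        have hce : c - e 0 = 0 := by simp [he_def]
        rw [hD0, hce]
        simp only [ENNReal.ofReal_zero, add_zero]
        exact le_trans (ENNReal.ofReal_le_ofReal (by linarith)) hZqν
      | succ n ih =>
        have hstep : Dn n ⊆ Dn (n+1) ∪ (Zq \ C n) := by
          intro y hy
          by_cases hyC : y ∈ C n
          · left
            refine ⟨hy.1, ?_⟩
            rw [mem_iInter₂]
            intro j hj
            have hj' := Finset.mem_range.1 hj
            rcases Nat.lt_succ_iff_lt_or_eq.1 hj' with hlt | rfl
            · exact (mem_iInter₂.1 hy.2) j (Finset.mem_range.2 hlt)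
            · exact hyC
          · right
            exact ⟨hy.1, hyC⟩
        have h1 : (ν : Measure X) (Dn n) ≤ (ν : Measure X) (Dn (n+1)) + ENNReal.ofReal (e (n+1)) :=
          le_trans (measure_mono hstep)
            (le_trans (measure_union_le _ _) (add_le_add le_rfl (hZqCj n)))
        calc ENNReal.ofReal b ≤ (ν : Measure X) (Dn n) + ENNReal.ofReal (c - e n) := ih
          _ ≤ ((ν : Measure X) (Dn (n+1)) + ENNReal.ofReal (e (n+1))) + ENNReal.ofReal (c - e n) :=
              add_le_add h1 le_rfl
          _ = (ν : Measure X) (Dn (n+1)) + ENNReal.ofReal (c - e (n+1)) := by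
              rw [add_assoc, ← ENNReal.ofReal_add (he_pos (n+1)).le (by linarith [he_le n])]
              congr 2
              linarith [he_half n]
    have hDn_lb : ∀ n, ENNReal.ofReal (b - c) ≤ (ν : Measure X) (Dn n) := by
      intro n
      have h1 := hDn_bound n
      have h2 : ENNReal.ofReal (c - e n) ≤ ENNReal.ofReal c :=
        ENNReal.ofReal_le_ofReal (by linarith [he_pos n])
      have h3 : ENNReal.ofReal b ≤ (ν : Measure X) (Dn n) + ENNReal.ofReal c :=
        le_trans h1 (add_le_add le_rfl h2)
      calc ENNReal.ofReal (b - c) = ENNReal.ofReal b - ENNReal.ofReal c :=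
            ENNReal.ofReal_sub _ hc0.le
        _ ≤ _ := tsub_le_iff_right.2 h3
    have htendD := tendsto_measure_iInter_atTop (μ := (ν : Measure X))
      (fun n => (hDn_meas n).nullMeasurableSet) hDn_anti ⟨0, measure_ne_top _ _⟩
    have hInter_lb : ENNReal.ofReal (b - c) ≤ (ν : Measure X) (⋂ n, Dn n) :=
      ge_of_tendsto htendD (Filter.Eventually.of_forall hDn_lb)
    have hsubq : (⋂ n, Dn n) ⊆ {q} := by
      intro y hy
      rw [mem_iInter] at hy
      have hyZq : y ∈ Zq := (hy 0).1
      rw [mem_singleton_iff]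
      by_contra hne
      have hζ : y - q ≠ 0 := sub_ne_zero.2 hne
      obtain ⟨w, hwn, hwval, γ, hγ, hkill⟩ :=
        kill_lemma u (y - q) d a hu hd ha ha1 hζ (hZq_struct y hyZq)
      have hwV : w ∈ V := by
        rw [hV_def]
        exact mem_setOf.2 ⟨hwn, hwval s₀ (by linarith)⟩
      obtain ⟨z, hzD, hzdist⟩ := Metric.mem_closure_iff.1 (hDdense hwV) γ hγ
      obtain ⟨j, rfl⟩ : ∃ j, f j = z := by
        rw [hfD] at hzD
        exact hzD
      have hyCj : y ∈ C j := by
        have h2 := (hy (j+1)).2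
        exact (mem_iInter₂.1 h2) j (Finset.mem_range.2 (Nat.lt_succ_self j))
      have hyC' : ‖(y - q) + sj j • f j‖ ≤ sj j := (mem_cball_iff _ _ _ _ _).1 hyCj
      have hk := hkill (sj j) (by linarith [hsj_a j]) (hsj_1 j).le
      have hpert : ‖(y - q) + sj j • w‖ ≤ ‖(y - q) + sj j • f j‖ + sj j * ‖w - f j‖ := by
        calc ‖(y - q) + sj j • w‖ = ‖((y - q) + sj j • f j) + sj j • (w - f j)‖ := by
              congr 1; rw [smul_sub]; abel
          _ ≤ ‖(y - q) + sj j • f j‖ + ‖sj j • (w - f j)‖ := norm_add_le _ _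
          _ = ‖(y - q) + sj j • f j‖ + sj j * ‖w - f j‖ := by
              rw [norm_smul_nn _ (by linarith [hsj_a j])]
      have hwf : ‖w - f j‖ < γ := by
        rw [← dist_eq_norm]
        exact hzdist
      have hlast : sj j * ‖w - f j‖ < γ := by
        calc sj j * ‖w - f j‖ ≤ 1 * ‖w - f j‖ :=
              mul_le_mul_of_nonneg_right (by linarith [hsj_1 j]) (norm_nonneg _)
          _ = ‖w - f j‖ := one_mul _
          _ < γ := hwf
      linarith
    exact le_trans hInter_lb (le_trans (measure_mono hsubq) le_rfl)
  by_contra hb_lt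
  push_neg at hb_lt
  have hne_top : (ν : Measure X) {q} ≠ ⊤ := measure_ne_top _ _
  set m : ℝ := ((ν : Measure X) {q}).toReal with hm_def
  have hm0 : 0 ≤ m := ENNReal.toReal_nonneg
  have hmeq : (ν : Measure X) {q} = ENNReal.ofReal m := (ENNReal.ofReal_toReal hne_top).symm
  rw [hmeq] at hb_lt
  have hmb : m < b := by
    by_contra hmb
    push_neg at hmb
    exact absurd hb_lt (not_lt.2 (ENNReal.ofReal_le_ofReal hmb))
  set c : ℝ := min (min ((b - m)/2) (b/4)) (a/2) with hc_def
  have hc0 : 0 < c := lt_min (lt_min (by linarith) (by linarith)) (by linarith)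
  have hc2 : 2*c < b := by
    have h1 : c ≤ b/4 := le_trans (min_le_left _ _) (min_le_right _ _)
    linarith
  have hca : c < a := by
    have h1 : c ≤ a/2 := min_le_right _ _
    linarith
  have hkey := key c hc0 hc2 hca
  rw [hmeq] at hkey
  have hle : b - c ≤ m := by
    have h2 := (ENNReal.ofReal_le_ofReal_iff hm0).1 hkey
    linarith
  have hcbm : c ≤ (b - m)/2 := le_trans (min_le_left _ _) (min_le_left _ _)
  linarith

end Main

section Final

variable {X : Type*} [NormedAddCommGroup X] [NormedSpace ℝ X]
  [SeparableSpace X] [MeasurableSpace X] [BorelSpace X]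

lemma dirac_case (μ ν : ProbabilityMeasure X) (p : X)
    (hrep : (μ : Measure X) = Measure.dirac p)
    (hW : ∀ x : X, witness μ x = witness ν x) : μ = ν := by
  have hwit0 : witness μ p ≤ 0 := by
    by_contra hc
    push_neg at hc
    have hball : ENNReal.ofReal (1 - witness μ p / 2) ≤ (μ : Measure X) (ball p (witness μ p / 2)) := by
      rw [hrep, Measure.dirac_apply_of_mem (mem_ball_self (by linarith))]
      exact ENNReal.ofReal_le_one.2 (by linarith)
    have := witness_le μ (by linarith) hball
    linarith
  have hwitν : ∀ r : ℝ, 0 < r → (ν : Measure X) (ball p r) = 1 := by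
    intro r hr
    refine le_antisymm prob_le_one ?_
    by_contra hc
    push_neg at hc
    have hne : (ν : Measure X) (ball p r) ≠ ⊤ := measure_ne_top _ _
    set m : ℝ := ((ν : Measure X) (ball p r)).toReal with hm_def
    have hm0 : 0 ≤ m := ENNReal.toReal_nonneg
    have hmeq : (ν : Measure X) (ball p r) = ENNReal.ofReal m := (ENNReal.ofReal_toReal hne).symm
    have hm1 : m < 1 := by
      by_contra h'
      push_neg at h'
      apply absurd hc
      push_neg
      rw [hmeq, show (1:ℝ≥0∞) = ENNReal.ofReal 1 by simp]
      exact ENNReal.ofReal_le_ofReal h'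
    set ε : ℝ := min (r/2) ((1 - m)/2) with hε_def
    have hε0 : 0 < ε := lt_min (by linarith) (by linarith)
    have hεr : ε ≤ r := le_trans (min_le_left _ _) (by linarith)
    have hεm : ε ≤ (1 - m)/2 := min_le_right _ _
    have hwlt : witness ν p < ε := by
      rw [← hW]
      linarith [witness_nonneg μ p]
    have hball := ball_of_witness_lt ν hwlt
    have hle : ENNReal.ofReal (1 - ε) ≤ ENNReal.ofReal m := by
      calc ENNReal.ofReal (1 - ε) ≤ (ν : Measure X) (ball p ε) := hball
        _ ≤ (ν : Measure X) (ball p r) := measure_mono (ball_subset_ball hεr)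
        _ = ENNReal.ofReal m := hmeq
    have := (ENNReal.ofReal_le_ofReal_iff hm0).1 hle
    linarith
  have hνp : (ν : Measure X) {p} = 1 := by
    have hsing : ({p} : Set X) = ⋂ n : ℕ, ball p (1/(n+1)) := by
      ext y
      simp only [mem_singleton_iff, mem_iInter, mem_ball]
      constructor
      · rintro rfl n
        rw [dist_self]
        positivity
      · intro h
        by_contra hne
        have hdp : 0 < dist y p := dist_pos.2 hne
        obtain ⟨n, hn⟩ := exists_nat_one_div_lt hdp
        have h2 := h n
        have hc2 : (1:ℝ)/(n+1) < dist y p := by exact_mod_cast hn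
        linarith
    have hanti : Antitone (fun n : ℕ => ball p (1/((n:ℝ)+1))) := by
      intro m n hmn
      apply ball_subset_ball
      apply one_div_le_one_div_of_le
      · positivity
      · exact_mod_cast Nat.succ_le_succ hmn
    have htend := tendsto_measure_iInter_atTop (μ := (ν : Measure X))
      (fun n => measurableSet_ball.nullMeasurableSet) hanti ⟨0, measure_ne_top _ _⟩
    have htend2 : Tendsto (fun _ : ℕ => (1:ℝ≥0∞)) atTop
        (nhds ((ν : Measure X) (⋂ n : ℕ, ball p (1/((n:ℝ)+1))))) := by
      apply htend.congr
      intro n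
      exact hwitν _ (by positivity)
    have h1 := tendsto_nhds_unique htend2 tendsto_const_nhds
    rw [hsing]
    exact h1
  apply ProbabilityMeasure.toMeasure_injective
  apply Measure.ext
  intro A hA
  rw [hrep, Measure.dirac_apply' _ hA]
  by_cases hp : p ∈ A
  · rw [Set.indicator_of_mem hp]
    have h1 : (ν : Measure X) {p} ≤ (ν : Measure X) A := measure_mono (singleton_subset_iff.2 hp)
    rw [hνp] at h1
    have h2 : (ν : Measure X) A ≤ 1 := prob_le_one
    simp only [Pi.one_apply]
    exact (le_antisymm h2 h1).symm
  · rw [Set.indicator_of_notMem hp]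
    have hcompl : (ν : Measure X) ({p}ᶜ) = 0 := by
      rw [measure_compl (measurableSet_singleton p) (measure_ne_top _ _), measure_univ, hνp]
      simp
    have hsub : A ⊆ ({p} : Set X)ᶜ := by
      intro y hy
      simp only [mem_compl_iff, mem_singleton_iff]
      intro heq
      exact hp (heq ▸ hy)
    have : (ν : Measure X) A ≤ 0 := hcompl ▸ measure_mono hsub
    exact (le_antisymm this (zero_le)).symm

end Final

/-- Corollary 3.3 (second part): a finitely supported measure with at most two points in its
support is determined by its witness function. -/
theorem witness_determines_two_point {X : Type*} [NormedAddCommGroup X] [NormedSpace ℝ X]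
    [CompleteSpace X] [SeparableSpace X] [MeasurableSpace X] [BorelSpace X]
    (μ : ProbabilityMeasure X) (hμ : IsFinitelySupported μ)
    (hcard : (mSupport μ).encard ≤ 2)
    (ν : ProbabilityMeasure X)
    (hW : ∀ x : X, witness μ x = witness ν x) :
    μ = ν := by
  classical
  obtain ⟨s, wght, hpos, hsum, hrep⟩ := hμ
  have hsub : ∀ x ∈ s, x ∈ mSupport μ := by
    intro x hx
    intro r hr
    have heval : (μ : Measure X) (ball x r) =
        ∑ y ∈ s, (ENNReal.ofReal (wght y) • Measure.dirac y) (ball x r) := by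
      rw [hrep]
      exact Measure.finset_sum_apply s _ _
    have hterm : 0 < (ENNReal.ofReal (wght x) • Measure.dirac x) (ball x r) := by
      rw [Measure.smul_apply, smul_eq_mul, Measure.dirac_apply_of_mem (mem_ball_self hr), mul_one]
      exact ENNReal.ofReal_pos.2 (hpos x hx)
    calc (0:ℝ≥0∞) < (ENNReal.ofReal (wght x) • Measure.dirac x) (ball x r) := hterm
      _ ≤ ∑ y ∈ s, (ENNReal.ofReal (wght y) • Measure.dirac y) (ball x r) :=
          Finset.single_le_sum (f := fun y => (ENNReal.ofReal (wght y) • Measure.dirac y) (ball x r))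
            (fun y _ => zero_le) hx
      _ = (μ : Measure X) (ball x r) := heval.symm
  have hcard2 : s.card ≤ 2 := by
    have h1 : (↑s : Set X).encard ≤ 2 := le_trans (Set.encard_mono (fun x hx => hsub x hx)) hcard
    rw [Set.encard_coe_eq_coe_finsetCard] at h1
    exact_mod_cast h1
  have hcases : s.card = 0 ∨ s.card = 1 ∨ s.card = 2 := by omega
  rcases hcases with h0 | h1 | h2
  · exfalso
    rw [Finset.card_eq_zero] at h0
    subst h0
    simp at hsum
  · obtain ⟨p, rfl⟩ := Finset.card_eq_one.1 h1
    rw [Finset.sum_singleton] at hsum hrep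
    have hrep' : (μ : Measure X) = Measure.dirac p := by
      rw [hrep, hsum]
      simp
    exact dirac_case μ ν p hrep' hW
  · obtain ⟨p, q, hpq, rfl⟩ := Finset.card_eq_two.1 h2
    rw [Finset.sum_pair hpq] at hsum hrep
    have hp : 0 < wght p := hpos p (by simp)
    have hq : 0 < wght q := hpos q (by simp)
    have hq_mass : ENNReal.ofReal (wght q) ≤ (ν : Measure X) {q} :=
      atom_mass μ ν p q (wght p) (wght q) hsum hp hq hpq hrep hW
    have hrep' : (μ : Measure X) =
        ENNReal.ofReal (wght q) • Measure.dirac q + ENNReal.ofReal (wght p) • Measure.dirac p := by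
      rw [hrep, add_comm]
    have hp_mass : ENNReal.ofReal (wght p) ≤ (ν : Measure X) {p} :=
      atom_mass μ ν q p (wght q) (wght p) (by linarith) hq hp hpq.symm hrep' hW
    set A := ENNReal.ofReal (wght p) with hA_def
    set B := ENNReal.ofReal (wght q) with hB_def
    have hABsum : A + B = 1 := by
      rw [hA_def, hB_def, ← ENNReal.ofReal_add hp.le hq.le, hsum, ENNReal.ofReal_one]
    have hdisjpq : Disjoint ({p} : Set X) {q} :=
      Set.disjoint_singleton_left.2 (by simpa using hpq)
    have hpq_meas : MeasurableSet ({p, q} : Set X) :=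
      (measurableSet_singleton p).union (measurableSet_singleton q)
    have hunion : (ν : Measure X) {p, q} = (ν : Measure X) {p} + (ν : Measure X) {q} := by
      rw [show ({p, q} : Set X) = {p} ∪ {q} from rfl,
        measure_union hdisjpq (measurableSet_singleton q)]
    have hle1 : (ν : Measure X) {p} + (ν : Measure X) {q} ≤ 1 := by
      rw [← hunion]; exact prob_le_one
    have hpeq : (ν : Measure X) {p} = A := by
      refine le_antisymm ?_ hp_mass
      by_contra hcc
      push_neg at hcc
      have hlt : (1:ℝ≥0∞) < (ν : Measure X) {p} + (ν : Measure X) {q} := by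
        calc (1:ℝ≥0∞) = A + B := hABsum.symm
          _ < _ := ENNReal.add_lt_add_of_lt_of_le (by simp [hB_def]) hcc hq_mass
      exact absurd hle1 (not_le.2 hlt)
    have hqeq : (ν : Measure X) {q} = B := by
      refine le_antisymm ?_ hq_mass
      by_contra hcc
      push_neg at hcc
      have hlt : (1:ℝ≥0∞) < (ν : Measure X) {p} + (ν : Measure X) {q} := by
        calc (1:ℝ≥0∞) = A + B := hABsum.symm
          _ < _ := ENNReal.add_lt_add_of_le_of_lt (by simp [hA_def]) hp_mass hcc
      exact absurd hle1 (not_le.2 hlt)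
    have hfull : (ν : Measure X) {p, q} = 1 := by rw [hunion, hpeq, hqeq, hABsum]
    have hnull : (ν : Measure X) ({p, q}ᶜ) = 0 := by
      rw [measure_compl hpq_meas (measure_ne_top _ _), measure_univ, hfull]
      simp
    apply ProbabilityMeasure.toMeasure_injective
    apply Measure.ext
    intro S hS
    have hSsplit : (μ : Measure X) S = A * Measure.dirac p S + B * Measure.dirac q S := by
      rw [hrep, Measure.add_apply, Measure.smul_apply, Measure.smul_apply,
        smul_eq_mul, smul_eq_mul]
    have hνS : (ν : Measure X) S = (ν : Measure X) (S ∩ {p, q}) := by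
      have h1 : (ν : Measure X) (S ∩ {p,q}) + (ν : Measure X) (S \ {p,q}) = (ν : Measure X) S :=
        measure_inter_add_diff S hpq_meas
      have h2 : (ν : Measure X) (S \ {p,q}) = 0 := by
        refine le_antisymm ?_ (zero_le)
        calc (ν : Measure X) (S \ {p,q}) ≤ (ν : Measure X) ({p,q}ᶜ) :=
              measure_mono (fun y hy => hy.2)
          _ = 0 := hnull
      rw [← h1, h2, add_zero]
    have hsplit2 : S ∩ ({p,q} : Set X) = (S ∩ {p}) ∪ (S ∩ {q}) := by
      rw [show ({p,q} : Set X) = {p} ∪ {q} from rfl, inter_union_distrib_left]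
    have hdisj_int : Disjoint (S ∩ ({p} : Set X)) (S ∩ {q}) :=
      hdisjpq.mono inter_subset_right inter_subset_right
    have hmeas_int : MeasurableSet (S ∩ ({q} : Set X)) := hS.inter (measurableSet_singleton q)
    have hinter : (ν : Measure X) (S ∩ {p, q}) =
        (if p ∈ S then A else 0) + (if q ∈ S then B else 0) := by
      rw [hsplit2, measure_union hdisj_int hmeas_int]
      congr 1
      · by_cases hpS : p ∈ S
        · rw [if_pos hpS, inter_eq_self_of_subset_right (singleton_subset_iff.2 hpS), hpeq]
        · rw [if_neg hpS, Set.inter_singleton_eq_empty.2 hpS, measure_empty]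
      · by_cases hqS : q ∈ S
        · rw [if_pos hqS, inter_eq_self_of_subset_right (singleton_subset_iff.2 hqS), hqeq]
        · rw [if_neg hqS, Set.inter_singleton_eq_empty.2 hqS, measure_empty]
    rw [hSsplit, hνS, hinter, Measure.dirac_apply' _ hS, Measure.dirac_apply' _ hS]
    by_cases hpS : p ∈ S <;> by_cases hqS : q ∈ S <;>
      simp [hpS, hqS]
end

section
/- Let (X,‖·‖) be a separable real Banach space, s > 0, μ ∈ F_X a finitely supported measure and ν ∈ P_X with ν ≠ μ. Then π_s(μ,ν) = min{ε > 0 | s·μ(A) ≤ s·ν(closure(A^ε)) + ε for all A ⊆ S_μ}; in particular the infimum defining this set is attained. -/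
open MeasureTheory Metric Set TopologicalSpace

section Aux

open Filter ENNReal Topology
set_option linter.unusedSectionVars false

variable {X : Type*} [NormedAddCommGroup X] [NormedSpace ℝ X]
    [MeasurableSpace X] [BorelSpace X]

/-- Two probability measures agreeing on closed sets are equal. -/
lemma pm_eq_of_closed (μ ν : ProbabilityMeasure X)
    (h : ∀ C : Set X, IsClosed C → (μ : Measure X) C = (ν : Measure X) C) : μ = ν := by
  apply ProbabilityMeasure.toMeasure_injective
  apply MeasureTheory.ext_of_generate_finite _ ?_ isPiSystem_isClosed ?_
  · rw [h Set.univ isClosed_univ]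
  · rw [BorelSpace.measurable_eq (α := X), borel_eq_generateFrom_isClosed]
  · exact fun A hA => h A hA

lemma iInter_thickening_seq (d : ℝ) (hd : 0 ≤ d) (A : Set X) :
    (⋂ n : ℕ, Metric.thickening (d + 1 / (n + 1)) A) = Metric.cthickening d A := by
  apply Set.Subset.antisymm
  · rw [Metric.cthickening_eq_iInter_thickening hd]
    refine Set.subset_iInter fun ε => Set.subset_iInter fun hε => ?_
    obtain ⟨n, hn⟩ := exists_nat_one_div_lt (sub_pos.2 hε)
    exact (Set.iInter_subset _ n).trans (Metric.thickening_mono (by linarith) A)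
  · refine Set.subset_iInter fun n => ?_
    refine Metric.cthickening_subset_thickening' ?_ ?_ A
    · have : (0:ℝ) < 1 / (n + 1) := by positivity
      linarith
    · have : (0:ℝ) < 1 / (n + 1) := by positivity
      linarith

lemma tendsto_thickening_seq (ν : ProbabilityMeasure X) (d : ℝ) (hd : 0 ≤ d) (A : Set X) :
    Tendsto (fun n : ℕ => (ν : Measure X) (Metric.thickening (d + 1 / (n + 1)) A)) atTop
      (𝓝 ((ν : Measure X) (Metric.cthickening d A))) := by
  rw [← iInter_thickening_seq d hd A]
  apply MeasureTheory.tendsto_measure_iInter_atTop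
  · exact fun n => (Metric.isOpen_thickening).measurableSet.nullMeasurableSet
  · intro n m hnm
    refine Metric.thickening_mono ?_ A
    have hc : (n:ℝ) ≤ (m:ℝ) := Nat.cast_le.2 hnm
    have : (1:ℝ) / (m + 1) ≤ 1 / (n + 1) := by
      apply one_div_le_one_div_of_le (by positivity)
      linarith
    linarith
  · exact ⟨0, MeasureTheory.measure_ne_top _ _⟩

lemma tendsto_ofReal_seq (d : ℝ) :
    Tendsto (fun n : ℕ => ENNReal.ofReal (d + 1 / (n + 1))) atTop (𝓝 (ENNReal.ofReal d)) := by
  apply (ENNReal.continuous_ofReal.tendsto d).comp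
  have h0 : Tendsto (fun n : ℕ => d + 1 / ((n:ℝ) + 1)) atTop (𝓝 (d + 0)) :=
    (tendsto_const_nhds).add tendsto_one_div_add_atTop_nhds_zero_nat
  simpa using h0

end Aux

/-- Lemma 3.4 (second part): for a finitely supported `μ` and any `ν ≠ μ`, the
`s`-Lévy–Prokhorov distance is attained as the minimum of the set of `ε > 0` such that
`s·μ(A) ≤ s·ν(closure(A^ε)) + ε` for every `A ⊆ S_μ`. -/
theorem LPsdist_isLeast {X : Type*} [NormedAddCommGroup X] [NormedSpace ℝ X]
    [CompleteSpace X] [SeparableSpace X] [MeasurableSpace X] [BorelSpace X]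
    (s : ℝ) (hs : 0 < s)
    (μ ν : ProbabilityMeasure X) (hμ : IsFinitelySupported μ) (hne : ν ≠ μ) :
    IsLeast {ε : ℝ | 0 < ε ∧ ∀ A : Set X, A ⊆ mSupport μ →
        ENNReal.ofReal s * (μ : Measure X) A ≤
          ENNReal.ofReal s * (ν : Measure X) (closure (thickening ε A)) + ENNReal.ofReal ε}
      (LPsdist s μ ν) := by
  classical
  obtain ⟨T, w, hw, hwsum, hμeq⟩ := hμ
  set E : Set ℝ := {ε : ℝ | 0 < ε ∧ ∀ A : Set X, MeasurableSet A →
    ENNReal.ofReal s * (μ : Measure X) A ≤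
      ENNReal.ofReal s * (ν : Measure X) (thickening ε A) + ENNReal.ofReal ε} with hE
  have hLP : LPsdist s μ ν = sInf E := rfl
  have hs0 : ENNReal.ofReal s ≠ 0 := (ENNReal.ofReal_pos.mpr hs).ne'
  have hsT : ENNReal.ofReal s ≠ ⊤ := ENNReal.ofReal_ne_top
  -- E is nonempty and bounded below
  have hEne : E.Nonempty := by
    refine ⟨s + 1, by linarith, fun A hA => ?_⟩
    calc ENNReal.ofReal s * (μ : Measure X) A
        ≤ ENNReal.ofReal s * 1 := by gcongr; exact prob_le_one
      _ = ENNReal.ofReal s := mul_one _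
      _ ≤ ENNReal.ofReal (s + 1) := ENNReal.ofReal_le_ofReal (by linarith)
      _ ≤ _ := le_add_self
  have hEbdd : BddBelow E := ⟨0, fun x hx => hx.1.le⟩
  have hup : ∀ ε ∈ E, ∀ ε' : ℝ, ε ≤ ε' → ε' ∈ E := by
    rintro ε ⟨hε, hεE⟩ ε' hεε'
    refine ⟨lt_of_lt_of_le hε hεε', fun A hA => ?_⟩
    refine (hεE A hA).trans (add_le_add ?_ (ENNReal.ofReal_le_ofReal hεε'))
    exact mul_le_mul_right (measure_mono (thickening_mono hεε' A)) _
  have hdnn : 0 ≤ sInf E := Real.sInf_nonneg fun x hx => hx.1.le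
  have hmem : ∀ ε : ℝ, sInf E < ε → ε ∈ E := by
    intro ε hε
    obtain ⟨e, heE, he⟩ := (csInf_lt_iff hEbdd hEne).mp hε
    exact hup e heE ε he.le
  -- support facts
  have hTsub : (↑T : Set X) ⊆ mSupport μ := by
    intro x hx r hr
    rw [hμeq, Measure.finset_sum_apply]
    have hterm : 0 < (ENNReal.ofReal (w x) • Measure.dirac x : Measure X) (ball x r) := by
      rw [Measure.smul_apply, smul_eq_mul, Measure.dirac_apply' _ measurableSet_ball,
        Set.indicator_of_mem (mem_ball_self hr)]
      simpa using ENNReal.ofReal_pos.mpr (hw x hx)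
    exact lt_of_lt_of_le hterm (Finset.single_le_sum (f := fun i => (ENNReal.ofReal (w i) • Measure.dirac i : Measure X) (ball x r)) (fun i _ => zero_le) hx)
  have hTc : (μ : Measure X) ((↑T : Set X)ᶜ) = 0 := by
    rw [hμeq, Measure.finset_sum_apply]
    refine Finset.sum_eq_zero fun x hx => ?_
    rw [Measure.smul_apply, smul_eq_mul,
      Measure.dirac_apply' _ T.finite_toSet.measurableSet.compl,
      Set.indicator_of_notMem (by simp [hx])]
    simp
  have hsubT : mSupport μ ⊆ (↑T : Set X) := by
    intro x hx
    by_contra hxT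
    obtain ⟨r, hr, hball⟩ := Metric.isOpen_iff.mp T.finite_toSet.isClosed.isOpen_compl x hxT
    exact absurd (measure_mono_null hball hTc) (hx r hr).ne'
  have hSfin : (mSupport μ).Finite := T.finite_toSet.subset hsubT
  have hSnull : (μ : Measure X) ((mSupport μ)ᶜ) = 0 :=
    measure_mono_null (Set.compl_subset_compl.2 hTsub) hTc
  -- positivity of the infimum
  have hdpos : 0 < sInf E := by
    rcases hdnn.lt_or_eq with h | h
    · exact h
    exfalso
    apply hne
    have hall : ∀ ε : ℝ, 0 < ε → ε ∈ E := fun ε hε => hmem ε (h ▸ hε)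
    have hle : ∀ C : Set X, IsClosed C → (μ : Measure X) C ≤ (ν : Measure X) C := by
      intro C hC
      have h3 := (ENNReal.Tendsto.const_mul (tendsto_thickening_seq ν 0 le_rfl C)
        (Or.inr hsT)).add (tendsto_ofReal_seq 0)
      rw [Metric.cthickening_zero, hC.closure_eq] at h3
      simp only [ENNReal.ofReal_zero, add_zero] at h3
      have key : ENNReal.ofReal s * (μ : Measure X) C ≤ ENNReal.ofReal s * (ν : Measure X) C := by
        refine ge_of_tendsto' h3 fun n => ?_
        exact (hall _ (by positivity)).2 C hC.measurableSet
      exact (ENNReal.mul_le_mul_iff_right hs0 hsT).mp key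
    have hge : ∀ C : Set X, IsClosed C → (ν : Measure X) C ≤ (μ : Measure X) C := by
      intro C hC
      rw [Set.measure_eq_iInf_isOpen C (μ : Measure X)]
      refine le_iInf fun U => le_iInf fun hCU => le_iInf fun hU => ?_
      refine (measure_mono hCU).trans ?_
      have h1 : (μ : Measure X) Uᶜ ≤ (ν : Measure X) Uᶜ := hle Uᶜ hU.isClosed_compl
      rw [measure_compl hU.measurableSet (measure_ne_top _ _),
        measure_compl hU.measurableSet (measure_ne_top _ _), measure_univ, measure_univ] at h1
      calc (ν : Measure X) U = 1 - (1 - (ν : Measure X) U) :=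
            (ENNReal.sub_sub_cancel ENNReal.one_ne_top prob_le_one).symm
        _ ≤ 1 - (1 - (μ : Measure X) U) := tsub_le_tsub_left h1 1
        _ = (μ : Measure X) U := ENNReal.sub_sub_cancel ENNReal.one_ne_top prob_le_one
    exact pm_eq_of_closed ν μ fun C hC => le_antisymm (hge C hC) (hle C hC)
  rw [hLP]
  constructor
  · -- membership
    refine ⟨hdpos, fun A hA => ?_⟩
    have hAm : MeasurableSet A := ((hSfin.subset hA).measurableSet)
    have h3 := (ENNReal.Tendsto.const_mul (tendsto_thickening_seq ν (sInf E) hdnn A)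
      (Or.inr hsT)).add (tendsto_ofReal_seq (sInf E))
    rw [closure_thickening hdpos]
    refine ge_of_tendsto' h3 fun n => ?_
    exact (hmem _ (lt_add_of_pos_right _ (by positivity))).2 A hAm
  · -- lower bound
    rintro ε ⟨hε, hεF⟩
    refine le_of_forall_gt_imp_ge_of_dense fun ε' hε' => ?_
    refine csInf_le hEbdd ⟨hε.trans hε', fun A hAm => ?_⟩
    have hμA : (μ : Measure X) A = (μ : Measure X) (A ∩ mSupport μ) :=
      (measure_inter_conull hSnull).symm
    have hsub : closure (thickening ε (A ∩ mSupport μ)) ⊆ thickening ε' A := by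
      rw [closure_thickening hε]
      exact (Metric.cthickening_subset_thickening' (hε.trans hε') hε' _).trans
        (thickening_subset_of_subset _ Set.inter_subset_left)
    calc ENNReal.ofReal s * (μ : Measure X) A
        = ENNReal.ofReal s * (μ : Measure X) (A ∩ mSupport μ) := by rw [hμA]
      _ ≤ ENNReal.ofReal s * (ν : Measure X) (closure (thickening ε (A ∩ mSupport μ)))
            + ENNReal.ofReal ε := hεF _ Set.inter_subset_right
      _ ≤ ENNReal.ofReal s * (ν : Measure X) (thickening ε' A) + ENNReal.ofReal ε' :=
          add_le_add (mul_le_mul_right (measure_mono hsub) _)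
            (ENNReal.ofReal_le_ofReal hε'.le)
end

section
/- Let (X,‖·‖) be a separable real Banach space, s > 0, let μ ∈ F_X with #S_μ ≤ 2 and let ν ∈ P_X. If the s-witness functions coincide, i.e., W_{s,μ}(x) = W_{s,ν}(x) for all x ∈ X, then μ = ν. -/
open MeasureTheory Metric Set TopologicalSpace
open scoped ENNReal NNReal
set_option maxHeartbeats 1000000


namespace LPAux

variable {X : Type*} [NormedAddCommGroup X] [NormedSpace ℝ X]
    [MeasurableSpace X] [BorelSpace X]

lemma diracPM_coe (x : X) : (diracPM x : Measure X) = Measure.dirac x := rfl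

/-- The defining condition set of the s-LP distance from a Dirac measure. -/
def Scond (s : ℝ) (x : X) (ρ : ProbabilityMeasure X) : Set ℝ :=
  {ε : ℝ | 0 < ε ∧ ∀ A : Set X, MeasurableSet A →
    ENNReal.ofReal s * (diracPM x : Measure X) A ≤
      ENNReal.ofReal s * (ρ : Measure X) (thickening ε A) + ENNReal.ofReal ε}

lemma lps_eq (s : ℝ) (x : X) (ρ : ProbabilityMeasure X) :
    LPsdist s (diracPM x) ρ = sInf (Scond s x ρ) := rfl

lemma mem_Scond_iff {s : ℝ} (x : X) (ρ : ProbabilityMeasure X) {ε : ℝ} (hε : 0 < ε) :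
    ε ∈ Scond s x ρ ↔
      ENNReal.ofReal s ≤ ENNReal.ofReal s * (ρ : Measure X) (ball x ε) + ENNReal.ofReal ε := by
  constructor
  · intro h
    have h1 := h.2 {x} (measurableSet_singleton x)
    rw [diracPM_coe, Measure.dirac_apply' _ (measurableSet_singleton x),
      indicator_of_mem (mem_singleton x), thickening_singleton] at h1
    simpa using h1
  · intro h
    refine ⟨hε, fun A hA => ?_⟩
    rw [diracPM_coe, Measure.dirac_apply' _ hA]
    by_cases hx : x ∈ A
    · rw [indicator_of_mem hx]
      have hsub : ball x ε ⊆ thickening ε A := fun y hy =>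
        (mem_thickening_iff).mpr ⟨x, hx, by rwa [mem_ball] at hy⟩
      calc ENNReal.ofReal s * (1 : X → ℝ≥0∞) x = ENNReal.ofReal s := by simp
        _ ≤ ENNReal.ofReal s * (ρ : Measure X) (ball x ε) + ENNReal.ofReal ε := h
        _ ≤ _ := add_le_add (mul_le_mul_right (measure_mono hsub) _) le_rfl
    · rw [indicator_of_notMem hx]
      simp

lemma Scond_bddBelow (s : ℝ) (x : X) (ρ : ProbabilityMeasure X) : BddBelow (Scond s x ρ) :=
  ⟨0, fun _ h => h.1.le⟩

lemma Scond_nonempty {s : ℝ} (hs : 0 < s) (x : X) (ρ : ProbabilityMeasure X) :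
    (Scond s x ρ).Nonempty :=
  ⟨s, (mem_Scond_iff x ρ hs).mpr le_add_self⟩

lemma lps_le {s : ℝ} {x : X} {ρ : ProbabilityMeasure X} {ε : ℝ} (hε : 0 < ε)
    (h : ENNReal.ofReal s ≤ ENNReal.ofReal s * (ρ : Measure X) (ball x ε) + ENNReal.ofReal ε) :
    LPsdist s (diracPM x) ρ ≤ ε := by
  rw [lps_eq]
  exact csInf_le (Scond_bddBelow s x ρ) ((mem_Scond_iff x ρ hε).mpr h)

lemma cond_of_lps_lt {s : ℝ} (hs : 0 < s) {x : X} {ρ : ProbabilityMeasure X} {ε : ℝ}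
    (h : LPsdist s (diracPM x) ρ < ε) :
    ENNReal.ofReal s ≤ ENNReal.ofReal s * (ρ : Measure X) (ball x ε) + ENNReal.ofReal ε := by
  rw [lps_eq] at h
  obtain ⟨c, hc, hcε⟩ := exists_lt_of_csInf_lt (Scond_nonempty hs x ρ) h
  have h1 := (mem_Scond_iff x ρ hc.1).mp hc
  exact h1.trans (add_le_add (mul_le_mul_right (measure_mono (ball_subset_ball hcε.le)) _)
    (ENNReal.ofReal_le_ofReal hcε.le))

lemma cond_lt_of_lt_lps {s : ℝ} {x : X} {ρ : ProbabilityMeasure X} {ε : ℝ} (hε : 0 < ε)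
    (h : ε < LPsdist s (diracPM x) ρ) :
    ENNReal.ofReal s * (ρ : Measure X) (ball x ε) + ENNReal.ofReal ε < ENNReal.ofReal s := by
  have h' : ε < sInf (Scond s x ρ) := by rw [← lps_eq]; exact h
  have hmem : ε ∉ Scond s x ρ := fun hm =>
    absurd (csInf_le (Scond_bddBelow s x ρ) hm) (not_le.mpr h')
  exact not_le.mp (fun hcond => hmem ((mem_Scond_iff x ρ hε).mpr hcond))

lemma le_lps {s : ℝ} (hs : 0 < s) {x : X} {ρ : ProbabilityMeasure X} (c : ℝ)
    (h : ∀ ε : ℝ, 0 < ε → ε < c →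
      ENNReal.ofReal s * (ρ : Measure X) (ball x ε) + ENNReal.ofReal ε < ENNReal.ofReal s) :
    c ≤ LPsdist s (diracPM x) ρ := by
  rw [lps_eq]
  refine le_csInf (Scond_nonempty hs x ρ) (fun ε hε => ?_)
  by_contra hlt
  push_neg at hlt
  exact absurd ((mem_Scond_iff x ρ hε.1).mp hε) (not_le.mpr (h ε hε.1 hlt))

lemma ennreal_cond_iff {s ε : ℝ} (hs : 0 ≤ s) (hε : 0 ≤ ε) {m : ℝ≥0∞} (hm : m ≠ ⊤) :
    (ENNReal.ofReal s ≤ ENNReal.ofReal s * m + ENNReal.ofReal ε) ↔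
      s ≤ s * m.toReal + ε := by
  conv_lhs => rw [← ENNReal.ofReal_toReal hm]
  rw [← ENNReal.ofReal_mul hs, ← ENNReal.ofReal_add (mul_nonneg hs ENNReal.toReal_nonneg) hε,
    ENNReal.ofReal_le_ofReal_iff (add_nonneg (mul_nonneg hs ENNReal.toReal_nonneg) hε)]

lemma ennreal_cond_lt_iff {s ε : ℝ} (hs : 0 ≤ s) (hε : 0 ≤ ε) {m : ℝ≥0∞} (hm : m ≠ ⊤) :
    (ENNReal.ofReal s * m + ENNReal.ofReal ε < ENNReal.ofReal s) ↔
      s * m.toReal + ε < s := by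
  rw [← not_le, ← not_le, ennreal_cond_iff hs hε hm]

variable {s : ℝ} {μ ν : ProbabilityMeasure X} {p q : X} {a b : ℝ}

open Classical in
lemma mu_apply
    (μ2 : (μ : Measure X) =
      ENNReal.ofReal a • Measure.dirac p + ENNReal.ofReal b • Measure.dirac q)
    {A : Set X} (hA : MeasurableSet A) :
    (μ : Measure X) A =
      (if p ∈ A then ENNReal.ofReal a else 0) + (if q ∈ A then ENNReal.ofReal b else 0) := by
  rw [μ2, Measure.add_apply, Measure.smul_apply, Measure.smul_apply,
    Measure.dirac_apply' _ hA, Measure.dirac_apply' _ hA, smul_eq_mul, smul_eq_mul,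
    indicator_apply, indicator_apply]
  split_ifs <;> simp

lemma wit_ge_min (hs : 0 < s)
    (μ2 : (μ : Measure X) =
      ENNReal.ofReal a • Measure.dirac p + ENNReal.ofReal b • Measure.dirac q)
    (y : X) :
    min s (min (dist y p) (dist y q)) ≤ LPsdist s (diracPM y) μ := by
  refine le_lps hs _ (fun ε hε hlt => ?_)
  have hεp : ε < dist y p := lt_of_lt_of_le hlt ((min_le_right s _).trans (min_le_left _ _))
  have hεq : ε < dist y q := lt_of_lt_of_le hlt ((min_le_right s _).trans (min_le_right _ _))
  have hp : p ∉ ball y ε := by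
    rw [mem_ball, dist_comm]
    exact not_lt.mpr hεp.le
  have hq : q ∉ ball y ε := by
    rw [mem_ball, dist_comm]
    exact not_lt.mpr hεq.le
  have hm : (μ : Measure X) (ball y ε) = 0 := by
    rw [mu_apply μ2 measurableSet_ball, if_neg hp, if_neg hq, add_zero]
  rw [hm, mul_zero, zero_add]
  exact (ENNReal.ofReal_lt_ofReal_iff hs).mpr (lt_of_lt_of_le hlt (min_le_left _ _))

lemma null_ball_off_seg (hs : 0 < s)
    (μ2 : (μ : Measure X) =
      ENNReal.ofReal a • Measure.dirac p + ENNReal.ofReal b • Measure.dirac q)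
    (hμν : ∀ x : X, LPsdist s (diracPM x) μ = LPsdist s (diracPM x) ν)
    {z : X} (hz : z ∉ segment ℝ p q) :
    ∃ θ : ℝ, 0 < θ ∧ (ν : Measure X) (ball z θ) = 0 := by
  have hclosed : IsClosed (segment ℝ p q) := by
    rw [segment_eq_image']
    exact (isCompact_Icc.image (Continuous.add continuous_const (continuous_id.smul continuous_const))).isClosed
  obtain ⟨f, u, hfu, huz⟩ := geometric_hahn_banach_closed_point (convex_segment p q) hclosed hz
  have hfp : f p < u := hfu p (left_mem_segment ℝ p q)
  have hfq : f q < u := hfu q (right_mem_segment ℝ p q)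
  have hθ₁ : 0 < f z - u := sub_pos.mpr huz
  have hf0 : f ≠ 0 := by
    intro h
    rw [h] at hfp huz
    simp only [ContinuousLinearMap.zero_apply] at hfp huz
    linarith
  have hfn : 0 < ‖f‖ := by
    rcases eq_or_lt_of_le (norm_nonneg f) with h | h
    · exact absurd (f.opNorm_zero_iff.mp h.symm) hf0
    · exact h
  set Θ : ℝ := (f z - u) / ‖f‖ with hΘdef
  have hΘ : 0 < Θ := div_pos hθ₁ hfn
  have hfzu : f z - u = Θ * ‖f‖ := by
    rw [hΘdef]; field_simp
  set θ : ℝ := min (Θ / 4) (s / 2) with hθdef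
  have hθpos : 0 < θ := lt_min (by positivity) (by positivity)
  have hθΘ : θ ≤ Θ / 4 := min_le_left _ _
  have hθs : θ ≤ s / 2 := min_le_right _ _
  set κ : ℝ := Θ / (2 * s) with hκdef
  have hκ : 0 < κ := by positivity
  have hsκ : s * κ = Θ / 2 := by
    rw [hκdef]; field_simp
  obtain ⟨e, he1, hfe⟩ := f.exists_lt_apply_of_lt_opNorm
    (show ‖f‖ * (1 - κ) < ‖f‖ by nlinarith)
  set e' : X := if 0 ≤ f e then e else -e with he'def
  have he'1 : ‖e'‖ ≤ 1 := by
    rw [he'def]; split_ifs <;> simp [he1.le]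
  have hfe' : ‖f‖ * (1 - κ) < f e' := by
    rw [he'def]; split_ifs with h0
    · rwa [Real.norm_eq_abs, abs_of_nonneg h0] at hfe
    · rw [map_neg]
      rwa [Real.norm_eq_abs, abs_of_neg (lt_of_not_ge h0)] at hfe

  refine ⟨θ, hθpos, ?_⟩
  have key : ∀ ζ : ℝ, 0 < ζ → ζ < 1/2 → ((ν : Measure X) (ball z θ)).toReal < ζ := by
    intro ζ hζ hζ2
    set lam : ℝ := s - s * ζ - θ with hlamdef
    have hlam : 0 < lam := by nlinarith
    have hlams : lam ≤ s := by nlinarith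
    set ε : ℝ := s - s * ζ with hεdef
    have hεθ : ε = lam + θ := by rw [hεdef, hlamdef]; ring
    have hεpos : 0 < ε := by nlinarith
    have hεs : ε < s := by nlinarith
    set y : X := z + lam • e' with hydef
    have hbd : ∀ v : X, f v < u → ε + θ ≤ dist y v := by
      intro v hv
      have h1 : f (y - v) ≤ ‖f‖ * ‖y - v‖ :=
        le_trans (le_abs_self _) (by simpa [Real.norm_eq_abs] using f.le_opNorm (y - v))
      have h2 : f (y - v) = (f z - f v) + lam * f e' := by
        rw [map_sub, hydef, map_add, _root_.map_smul, smul_eq_mul]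
        ring
      have h3 : (f z - u) + lam * (‖f‖ * (1 - κ)) ≤ f (y - v) := by
        rw [h2]
        have hmul := mul_le_mul_of_nonneg_left hfe'.le hlam.le
        nlinarith
      have h5' : lam * ‖f‖ * κ ≤ ‖f‖ * (Θ/2) := by
        calc lam * ‖f‖ * κ ≤ s * ‖f‖ * κ := by
              have := mul_le_mul_of_nonneg_right (mul_le_mul_of_nonneg_right hlams hfn.le) hκ.le
              linarith
          _ = ‖f‖ * (s * κ) := by ring
          _ = ‖f‖ * (Θ/2) := by rw [hsκ]
      have hA : ‖f‖ * θ ≤ ‖f‖ * (Θ/4) := mul_le_mul_of_nonneg_left hθΘ hfn.le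
      rw [hfzu] at h3
      have h6 : ‖f‖ * (lam + 2*θ) ≤ ‖f‖ * ‖y - v‖ := by nlinarith
      have h7 : lam + 2*θ ≤ ‖y - v‖ := le_of_mul_le_mul_left h6 hfn
      rw [dist_eq_norm]
      rw [hεθ]
      linarith
    have hyz : dist y z ≤ lam := by
      rw [hydef, dist_eq_norm, add_sub_cancel_left, norm_smul, Real.norm_eq_abs,
        abs_of_pos hlam]
      exact mul_le_of_le_one_right hlam.le he'1
    have hyp := hbd p hfp
    have hyq := hbd q hfq
    have hεlt : ε < LPsdist s (diracPM y) ν := by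
      rw [← hμν y]
      refine lt_of_lt_of_le ?_ (wit_ge_min hs μ2 y)
      exact lt_min hεs (lt_min (by linarith) (by linarith))
    have hcond := cond_lt_of_lt_lps hεpos hεlt
    have hreal : s * ((ν : Measure X) (ball y ε)).toReal + ε < s :=
      (ennreal_cond_lt_iff hs.le hεpos.le (measure_ne_top _ _)).mp hcond
    have hsub : ball z θ ⊆ ball y ε := by
      intro v hv
      rw [mem_ball] at hv ⊢
      have hd1 : dist v y ≤ dist v z + dist z y := dist_triangle v z y
      have hd2 : dist z y ≤ lam := by rw [dist_comm]; exact hyz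
      have : dist v y < θ + lam := by linarith
      rw [hεθ]
      linarith
    have hmono : ((ν : Measure X) (ball z θ)).toReal ≤ ((ν : Measure X) (ball y ε)).toReal :=
      ENNReal.toReal_mono (measure_ne_top _ _) (measure_mono hsub)
    nlinarith
  have h0 : ((ν : Measure X) (ball z θ)).toReal ≤ 0 := by
    by_contra hpos
    push_neg at hpos
    have h1 := key (min (((ν : Measure X) (ball z θ)).toReal) (1/4))
      (lt_min hpos (by norm_num)) (lt_of_le_of_lt (min_le_right _ _) (by norm_num))
    exact absurd h1 (not_lt.mpr (min_le_left _ _))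
  have h2 : ((ν : Measure X) (ball z θ)).toReal = 0 := le_antisymm h0 ENNReal.toReal_nonneg
  exact ((ENNReal.toReal_eq_zero_iff _).mp h2).resolve_right (measure_ne_top _ _)

lemma seg_compl_null [SeparableSpace X] (hs : 0 < s)
    (μ2 : (μ : Measure X) =
      ENNReal.ofReal a • Measure.dirac p + ENNReal.ofReal b • Measure.dirac q)
    (hμν : ∀ x : X, LPsdist s (diracPM x) μ = LPsdist s (diracPM x) ν) :
    (ν : Measure X) (segment ℝ p q)ᶜ = 0 := by
  haveI : SecondCountableTopology X := UniformSpace.secondCountable_of_separable X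
  refine measure_null_of_locally_null _ (fun z hz => ?_)
  obtain ⟨θ, hθ, hnull⟩ := null_ball_off_seg hs μ2 hμν hz
  exact ⟨ball z θ, mem_nhdsWithin_of_mem_nhds (ball_mem_nhds z hθ), hnull⟩

lemma toReal_singleton_ge {ν : ProbabilityMeasure X} {p : X} {c K e₀ : ℝ} (he₀ : 0 < e₀)
    (h : ∀ ε : ℝ, 0 < ε → ε ≤ e₀ → c - K * ε ≤ ((ν : Measure X) (closedBall p ε)).toReal) :
    c ≤ ((ν : Measure X) {p}).toReal := by
  have hr : ∀ n : ℕ, (0:ℝ) < e₀ / (n+1) := fun n => by positivity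
  have hrle : ∀ n : ℕ, e₀ / (n+1) ≤ e₀ := fun n => by
    rw [div_le_iff₀ (by positivity)]
    nlinarith [Nat.cast_nonneg (α := ℝ) n, he₀]
  have htend0 : Filter.Tendsto (fun n : ℕ => e₀/(n+1)) Filter.atTop (nhds 0) := by
    simpa [div_eq_mul_inv] using tendsto_one_div_add_atTop_nhds_zero_nat.const_mul e₀
  have hanti : Antitone (fun n : ℕ => closedBall p (e₀/(n+1))) := by
    intro m n hmn
    apply closedBall_subset_closedBall
    have h1 : (m:ℝ) + 1 ≤ (n:ℝ) + 1 := by exact_mod_cast Nat.succ_le_succ hmn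
    gcongr
  have hiInt : ⋂ n : ℕ, closedBall p (e₀/(n+1)) = {p} := by
    apply Subset.antisymm
    · intro v hv
      simp only [mem_iInter, mem_closedBall] at hv
      have hv0 : dist v p ≤ 0 := ge_of_tendsto' htend0 hv
      simp only [mem_singleton_iff, ← dist_le_zero]
      exact hv0
    · intro v hv
      rw [mem_singleton_iff] at hv
      subst hv
      exact mem_iInter.mpr (fun n => mem_closedBall_self (hr n).le)
  have htendμ : Filter.Tendsto (fun n : ℕ => (ν : Measure X) (closedBall p (e₀/(n+1))))
      Filter.atTop (nhds ((ν : Measure X) {p})) := by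
    have := tendsto_measure_iInter_atTop (μ := (ν : Measure X))
      (fun n => measurableSet_closedBall.nullMeasurableSet) hanti ⟨0, measure_ne_top _ _⟩
    rwa [hiInt] at this
  have htendR : Filter.Tendsto
      (fun n : ℕ => ((ν : Measure X) (closedBall p (e₀/(n+1)))).toReal)
      Filter.atTop (nhds (((ν : Measure X) {p}).toReal)) :=
    (ENNReal.tendsto_toReal (measure_ne_top _ _)).comp htendμ
  have hlimlb : Filter.Tendsto (fun n : ℕ => c - K * (e₀/(n+1))) Filter.atTop
      (nhds (c - K * 0)) :=
    Filter.Tendsto.sub tendsto_const_nhds (htend0.const_mul K)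
  have hfin : c - K * 0 ≤ ((ν : Measure X) {p}).toReal :=
    le_of_tendsto_of_tendsto' hlimlb htendR (fun n => h _ (hr n) (hrle n))
  simpa using hfin

lemma atom_lb (hs : 0 < s) (hpq : p ≠ q) (ha : 0 < a) (hb : 0 < b) (hab : a + b = 1)
    (μ2 : (μ : Measure X) =
      ENNReal.ofReal a • Measure.dirac p + ENNReal.ofReal b • Measure.dirac q)
    (hμν : ∀ x : X, LPsdist s (diracPM x) μ = LPsdist s (diracPM x) ν)
    (hsegnull : (ν : Measure X) (segment ℝ p q)ᶜ = 0) :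
    ENNReal.ofReal a ≤ (ν : Measure X) {p} := by
  set d : ℝ := dist p q with hddef
  have hd : 0 < d := dist_pos.mpr hpq
  have hd0 : d ≠ 0 := hd.ne'
  have hnormpq : ‖p - q‖ = d := by rw [hddef, dist_eq_norm]
  have main : ∀ η : ℝ, 0 < η → η ≤ d →
      s ≤ s * ((ν : Measure X) (closedBall p (2*η))).toReal + (s*b + 2*η) := by
    intro η hη hηd
    set x : X := p + (s*b) • ((d⁻¹) • (p - q)) with hxdef
    have hxp : dist x p = s * b := by
      rw [dist_eq_norm, hxdef, add_sub_cancel_left, norm_smul, norm_smul, Real.norm_eq_abs,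
        Real.norm_eq_abs, abs_of_pos (by positivity), abs_of_pos (by positivity : (0:ℝ) < d⁻¹),
        hnormpq]
      field_simp
    have hxq : dist x q = d + s * b := by
      have hxq1 : x - q = (1 + s*b*d⁻¹) • (p - q) := by
        rw [hxdef, smul_smul]
        module
      rw [dist_eq_norm, hxq1, norm_smul, Real.norm_eq_abs, abs_of_pos (by positivity), hnormpq]
      field_simp
    have hpb : p ∈ ball x (s*b + η) := by
      rw [mem_ball, dist_comm, hxp]
      linarith
    have hqb : q ∉ ball x (s*b + η) := by
      rw [mem_ball, dist_comm, hxq]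
      exact not_lt.mpr (by linarith)
    have hball : (μ : Measure X) (ball x (s*b + η)) = ENNReal.ofReal a := by
      rw [mu_apply μ2 measurableSet_ball, if_pos hpb, if_neg hqb, add_zero]
    have hmem : ENNReal.ofReal s ≤
        ENNReal.ofReal s * (μ : Measure X) (ball x (s*b + η)) + ENNReal.ofReal (s*b + η) := by
      rw [hball, ← ENNReal.ofReal_mul hs.le,
        ← ENNReal.ofReal_add (by positivity) (by positivity)]
      exact ENNReal.ofReal_le_ofReal (by nlinarith)
    have hle : LPsdist s (diracPM x) ν ≤ s*b + η := by
      rw [← hμν x]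
      exact lps_le (by positivity) hmem
    have hcond := cond_of_lps_lt hs (lt_of_le_of_lt hle (by linarith : s*b + η < s*b + 2*η))
    have hsub : (ν : Measure X) (ball x (s*b + 2*η)) ≤
        (ν : Measure X) (closedBall p (2*η)) := by
      have hss : ball x (s*b + 2*η) ⊆ closedBall p (2*η) ∪ (segment ℝ p q)ᶜ := by
        intro v hv
        by_cases hvseg : v ∈ segment ℝ p q
        · left
          obtain ⟨c₁, c₂, hc₁, hc₂, hc, hvv⟩ := hvseg
          have hc₁' : c₁ = 1 - c₂ := by linarith
          have hvx : v - x = (-(c₂ + s*b*d⁻¹)) • (p - q) := by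
            rw [← hvv, hc₁', hxdef, smul_smul]
            module
          have hdistvx : dist v x = c₂ * d + s * b := by
            rw [dist_eq_norm, hvx, norm_smul, Real.norm_eq_abs, abs_neg,
              abs_of_nonneg (by positivity), hnormpq]
            field_simp
          have hc2d : c₂ * d < 2*η := by
            rw [mem_ball, hdistvx] at hv
            linarith
          have hvp : v - p = c₂ • (q - p) := by
            rw [← hvv, hc₁']
            module
          rw [mem_closedBall, dist_eq_norm, hvp, norm_smul, Real.norm_eq_abs,
            abs_of_nonneg hc₂, norm_sub_rev, hnormpq]
          linarith
        · right
          exact hvseg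
      calc (ν : Measure X) (ball x (s*b + 2*η)) ≤
          (ν : Measure X) (closedBall p (2*η) ∪ (segment ℝ p q)ᶜ) := measure_mono hss
        _ ≤ (ν : Measure X) (closedBall p (2*η)) + (ν : Measure X) (segment ℝ p q)ᶜ :=
          measure_union_le _ _
        _ = _ := by rw [hsegnull, add_zero]
    have hcond2 : ENNReal.ofReal s ≤
        ENNReal.ofReal s * (ν : Measure X) (closedBall p (2*η)) + ENNReal.ofReal (s*b + 2*η) :=
      hcond.trans (add_le_add (mul_le_mul_right hsub _) le_rfl)
    have := (ennreal_cond_iff hs.le (by positivity) (measure_ne_top _ _)).mp hcond2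
    linarith
  have hKey : ∀ ε : ℝ, 0 < ε → ε ≤ 2*d →
      a - (1/s) * ε ≤ ((ν : Measure X) (closedBall p ε)).toReal := by
    intro ε hε hεd
    have hmain := main (ε/2) (by positivity) (by linarith)
    rw [show 2 * (ε/2) = ε by ring] at hmain
    have h4 : s*a + s*b = s := by rw [← mul_add, hab, mul_one]
    have h3 : s * ((1/s)*ε) = ε := by field_simp
    nlinarith [hmain, h3, h4, hs]
  have hTp : a ≤ ((ν : Measure X) {p}).toReal := toReal_singleton_ge (by positivity) hKey
  calc ENNReal.ofReal a ≤ ENNReal.ofReal (((ν : Measure X) {p}).toReal) :=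
      ENNReal.ofReal_le_ofReal hTp
    _ = (ν : Measure X) {p} := ENNReal.ofReal_toReal (measure_ne_top _ _)

lemma dirac_case (hs : 0 < s) {μ ν : ProbabilityMeasure X} {p : X}
    (μ1 : (μ : Measure X) = Measure.dirac p)
    (hμν : ∀ x : X, LPsdist s (diracPM x) μ = LPsdist s (diracPM x) ν) : μ = ν := by
  have hwit : ∀ ε : ℝ, 0 < ε → LPsdist s (diracPM p) μ ≤ ε := by
    intro ε hε
    refine lps_le hε ?_
    have hb : (μ : Measure X) (ball p ε) = 1 := by
      rw [μ1, Measure.dirac_apply' _ measurableSet_ball,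
        indicator_of_mem (mem_ball_self hε)]
      rfl
    rw [hb, mul_one]
    exact self_le_add_right _ _
  have hν : ∀ ε : ℝ, 0 < ε → s ≤ s * ((ν : Measure X) (closedBall p ε)).toReal + ε := by
    intro ε hε
    have hlt : LPsdist s (diracPM p) ν < ε := by
      have h0 : LPsdist s (diracPM p) ν ≤ ε/2 := by
        rw [← hμν p]; exact hwit (ε/2) (by positivity)
      linarith
    have hcond := cond_of_lps_lt hs hlt
    have hcond2 : ENNReal.ofReal s ≤
        ENNReal.ofReal s * (ν : Measure X) (closedBall p ε) + ENNReal.ofReal ε :=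
      hcond.trans (add_le_add (mul_le_mul_right (measure_mono ball_subset_closedBall) _) le_rfl)
    exact (ennreal_cond_iff hs.le hε.le (measure_ne_top _ _)).mp hcond2
  have hKey : ∀ ε : ℝ, 0 < ε → ε ≤ 1 →
      1 - (1/s) * ε ≤ ((ν : Measure X) (closedBall p ε)).toReal := by
    intro ε hε _
    have h1 := hν ε hε
    have h3 : s * ((1/s)*ε) = ε := by field_simp
    nlinarith [h1, h3, hs]
  have hTp : (1:ℝ) ≤ ((ν : Measure X) {p}).toReal := toReal_singleton_ge one_pos hKey
  have hTp' : ((ν : Measure X) {p}).toReal ≤ 1 := by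
    have h1 : (ν : Measure X) {p} ≤ 1 := prob_le_one
    simpa using ENNReal.toReal_mono (by simp) h1
  have hνp : (ν : Measure X) {p} = 1 := by
    have : ((ν : Measure X) {p}).toReal = 1 := le_antisymm hTp' hTp
    rw [← ENNReal.ofReal_toReal (measure_ne_top (ν : Measure X) {p}), this]
    simp
  refine Subtype.ext (Measure.ext fun A hA => ?_)
  show (μ : Measure X) A = (ν : Measure X) A
  rw [μ1, Measure.dirac_apply' _ hA]
  by_cases hpA : p ∈ A
  · rw [indicator_of_mem hpA]
    have h1 : (ν : Measure X) A ≤ 1 := prob_le_one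
    have h2 : (1:ℝ≥0∞) ≤ (ν : Measure X) A := by
      rw [← hνp]
      exact measure_mono (singleton_subset_iff.mpr hpA)
    simp only [Pi.one_apply]
    exact le_antisymm h2 h1
  · rw [indicator_of_notMem hpA]
    have hsub : A ⊆ ({p} : Set X)ᶜ := fun v hv hvp => hpA (by
      rw [mem_singleton_iff] at hvp
      exact hvp ▸ hv)
    have hc : (ν : Measure X) ({p} : Set X)ᶜ = 0 := by
      rw [measure_compl (measurableSet_singleton p) (measure_ne_top _ _), hνp, measure_univ,
        tsub_self]
    exact (le_antisymm ((measure_mono hsub).trans hc.le) zero_le).symm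

end LPAux

/-- Consequence in Lemma 3.5: a finitely supported measure with at most two points in its
support is determined by its `s`-witness function. -/
theorem switness_determines_two_point {X : Type*} [NormedAddCommGroup X] [NormedSpace ℝ X]
    [CompleteSpace X] [SeparableSpace X] [MeasurableSpace X] [BorelSpace X]
    (s : ℝ) (hs : 0 < s)
    (μ : ProbabilityMeasure X) (hμ : IsFinitelySupported μ)
    (hcard : (mSupport μ).encard ≤ 2)
    (ν : ProbabilityMeasure X)
    (hW : ∀ x : X, switness s μ x = switness s ν x) :
    μ = ν := by
  classical
  obtain ⟨F, w, hwpos, hwsum, hμeq⟩ := hμ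
  have hW' : ∀ x : X, LPsdist s (diracPM x) μ = LPsdist s (diracPM x) ν := hW
  have hFsub : (↑F : Set X) ⊆ mSupport μ := by
    intro x hx
    intro r hr
    have hxF : x ∈ F := hx
    rw [hμeq, Measure.finset_sum_apply]
    have hterm : 0 < (ENNReal.ofReal (w x) • Measure.dirac x) (ball x r) := by
      rw [Measure.smul_apply, smul_eq_mul, Measure.dirac_apply' _ measurableSet_ball,
        indicator_of_mem (mem_ball_self hr)]
      simp only [Pi.one_apply, mul_one]
      exact ENNReal.ofReal_pos.mpr (hwpos x hxF)
    calc (0:ℝ≥0∞) < (ENNReal.ofReal (w x) • Measure.dirac x) (ball x r) := hterm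
      _ ≤ _ := Finset.single_le_sum (f := fun y => (ENNReal.ofReal (w y) • Measure.dirac y) (ball x r))
          (fun i _ => zero_le) hxF
  have hcard2 : F.card ≤ 2 := by
    have h1 : ((↑F : Set X)).encard ≤ 2 := le_trans (Set.encard_mono hFsub) hcard
    rw [Set.encard_coe_eq_coe_finsetCard] at h1
    exact_mod_cast h1
  have hFpos : 0 < F.card := by
    rcases Finset.eq_empty_or_nonempty F with rfl | h
    · simp at hwsum
    · exact Finset.card_pos.mpr h
  have hc12 : F.card = 1 ∨ F.card = 2 := by omega
  rcases hc12 with h1 | h2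
  · obtain ⟨p, hFp⟩ := Finset.card_eq_one.mp h1
    subst hFp
    rw [Finset.sum_singleton] at hwsum
    rw [Finset.sum_singleton, hwsum, ENNReal.ofReal_one, one_smul] at hμeq
    exact LPAux.dirac_case hs hμeq hW'
  · obtain ⟨p, q, hpq, hFpq⟩ := Finset.card_eq_two.mp h2
    subst hFpq
    rw [Finset.sum_pair hpq] at hwsum hμeq
    have hap : 0 < w p := hwpos p (by simp)
    have haq : 0 < w q := hwpos q (by simp)
    have hμ2' : (μ : Measure X) =
        ENNReal.ofReal (w q) • Measure.dirac q + ENNReal.ofReal (w p) • Measure.dirac p := by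
      rw [hμeq, add_comm]
    have hnull := LPAux.seg_compl_null hs hμeq hW'
    have hnull' : (ν : Measure X) (segment ℝ q p)ᶜ = 0 := by
      rw [segment_symm]
      exact hnull
    have hp' := LPAux.atom_lb hs hpq hap haq hwsum hμeq hW' hnull
    have hq' := LPAux.atom_lb hs hpq.symm haq hap (by linarith) hμ2' hW' hnull'
    -- derive exact values
    have hdisj : Disjoint ({p} : Set X) {q} := by
      rw [Set.disjoint_singleton]
      exact hpq
    have hunion : (ν : Measure X) ({p} ∪ {q}) = (ν : Measure X) {p} + (ν : Measure X) {q} :=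
      measure_union hdisj (measurableSet_singleton q)
    have hle1 : (ν : Measure X) ({p} ∪ {q}) ≤ 1 := prob_le_one
    have hTp : w p ≤ ((ν : Measure X) {p}).toReal := by
      have := ENNReal.toReal_mono (measure_ne_top _ _) hp'
      rwa [ENNReal.toReal_ofReal hap.le] at this
    have hTq : w q ≤ ((ν : Measure X) {q}).toReal := by
      have := ENNReal.toReal_mono (measure_ne_top _ _) hq'
      rwa [ENNReal.toReal_ofReal haq.le] at this
    have hsum : ((ν : Measure X) {p}).toReal + ((ν : Measure X) {q}).toReal ≤ 1 := by
      have h1 := ENNReal.toReal_mono (by simp) hle1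
      rw [hunion, ENNReal.toReal_add (measure_ne_top _ _) (measure_ne_top _ _)] at h1
      simpa using h1
    have hTpa : ((ν : Measure X) {p}).toReal = w p := by linarith
    have hTqb : ((ν : Measure X) {q}).toReal = w q := by linarith
    have hνp : (ν : Measure X) {p} = ENNReal.ofReal (w p) := by
      rw [← ENNReal.ofReal_toReal (measure_ne_top (ν : Measure X) {p}), hTpa]
    have hνq : (ν : Measure X) {q} = ENNReal.ofReal (w q) := by
      rw [← ENNReal.ofReal_toReal (measure_ne_top (ν : Measure X) {q}), hTqb]
    have hmpq : MeasurableSet ({p, q} : Set X) :=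
      (measurableSet_singleton p).union (measurableSet_singleton q)
    have hpquq : ({p, q} : Set X) = {p} ∪ {q} := by
      rw [Set.insert_eq]
    have hνpq : (ν : Measure X) {p, q} = ENNReal.ofReal (w p) + ENNReal.ofReal (w q) := by
      rw [hpquq, hunion, hνp, hνq]
    have hνpq1 : (ν : Measure X) {p, q} = 1 := by
      rw [hνpq, ← ENNReal.ofReal_add hap.le haq.le, hwsum]
      simp
    have hcompl : (ν : Measure X) ({p, q} : Set X)ᶜ = 0 := by
      rw [measure_compl hmpq (measure_ne_top _ _), hνpq1, measure_univ, tsub_self]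
    refine Subtype.ext (Measure.ext fun A hA => ?_)
    show (μ : Measure X) A = (ν : Measure X) A
    rw [LPAux.mu_apply hμeq hA]
    have hA1 : (ν : Measure X) A = (ν : Measure X) (A ∩ {p, q}) := by
      refine le_antisymm ?_ (measure_mono inter_subset_left)
      calc (ν : Measure X) A ≤ (ν : Measure X) ((A ∩ {p, q}) ∪ ({p, q} : Set X)ᶜ) := by
            refine measure_mono (fun v hv => ?_)
            by_cases hvpq : v ∈ ({p, q} : Set X)
            · exact Or.inl ⟨hv, hvpq⟩
            · exact Or.inr hvpq
        _ ≤ (ν : Measure X) (A ∩ {p, q}) + (ν : Measure X) ({p, q} : Set X)ᶜ :=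
            measure_union_le _ _
        _ = (ν : Measure X) (A ∩ {p, q}) := by rw [hcompl, add_zero]
    by_cases hpA : p ∈ A <;> by_cases hqA : q ∈ A
    · have hint : A ∩ {p, q} = {p, q} := by
        apply inter_eq_right.mpr
        intro v hv
        rcases hv with rfl | hv
        · exact hpA
        · rw [mem_singleton_iff] at hv
          exact hv ▸ hqA
      rw [if_pos hpA, if_pos hqA, hA1, hint, hνpq]
    · have hint : A ∩ {p, q} = {p} := by
        ext v
        simp only [mem_inter_iff, mem_insert_iff, mem_singleton_iff]
        constructor
        · rintro ⟨hvA, rfl | rfl⟩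
          · rfl
          · exact absurd hvA hqA
        · rintro rfl
          exact ⟨hpA, Or.inl rfl⟩
      rw [if_pos hpA, if_neg hqA, hA1, hint, hνp, add_zero]
    · have hint : A ∩ {p, q} = {q} := by
        ext v
        simp only [mem_inter_iff, mem_insert_iff, mem_singleton_iff]
        constructor
        · rintro ⟨hvA, rfl | rfl⟩
          · exact absurd hvA hpA
          · rfl
        · rintro rfl
          exact ⟨hqA, Or.inr rfl⟩
      rw [if_neg hpA, if_pos hqA, hA1, hint, hνq, zero_add]
    · have hint : A ∩ {p, q} = ∅ := by
        ext v
        simp only [mem_inter_iff, mem_insert_iff, mem_singleton_iff, mem_empty_iff_false,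
          iff_false, not_and]
        rintro hvA (rfl | rfl)
        · exact hpA hvA
        · exact hqA hvA
      rw [if_neg hpA, if_neg hqA, hA1, hint, measure_empty, add_zero]
end

section
/- Let (X,‖·‖) be a separable real Banach space, ϑ ∈ P_X and x ∈ X. Let {y_{j,l} | 1 ≤ j ≤ k, 1 ≤ l ≤ d_j} ⊂ X be pairwise distinct points such that ρ_j := ‖x − y_{j,1}‖ = ‖x − y_{j,l}‖ for all 1 ≤ l ≤ d_j and each 1 ≤ j ≤ k, with ρ_j > ρ_{j+1} > 0 for 1 ≤ j ≤ k−1, and with w_{j,l} := ϑ({y_{j,l}}) > 0 for all j,l. Set w_j := Σ_{l=1}^{d_j} w_{j,l}, w̃ := 1 − Σ_{j=1}^{k} w_j, and for 0 ≤ r ≤ k let η_r := Σ_{j=1}^{r} Σ_{l=1}^{d_j} w_{j,l}·δ_{y_{j,l}} + (1 − Σ_{j=1}^{r} w_j)·δ_x. Assume w̃ > 0 and let ϑ̃ ∈ P_X be the measure with ϑ = Σ_{j=1}^{k} Σ_{l=1}^{d_j} w_{j,l}·δ_{y_{j,l}} + w̃·ϑ̃. For 1 ≤ r ≤ k say that x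 has property (P_r) if π(η_{r−1}, ϑ) ≤ ρ_r. Then: W_{w̃,ϑ̃}(x) = π(δ_x, ϑ) if x does not have (P_1); W_{w̃,ϑ̃}(x) = π(η_r, ϑ) if x has (P_r) but not (P_{r+1}) for some 1 ≤ r < k; and W_{w̃,ϑ̃}(x) = π(η_k, ϑ) if x has (P_k). -/
open MeasureTheory Metric Set TopologicalSpace

private lemma aux_sInf_le {E : Set ℝ} (h0 : ∀ a ∈ E, (0:ℝ) < a) {ε : ℝ} (hε : ε ∈ E) :
    sInf E ≤ ε := csInf_le ⟨0, fun a ha => (h0 a ha).le⟩ hε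

private lemma aux_sInf_nonneg {E : Set ℝ} (hne : E.Nonempty) (h0 : ∀ a ∈ E, (0:ℝ) < a) :
    0 ≤ sInf E := le_csInf hne fun a ha => (h0 a ha).le

private lemma aux_mem_of_lt {E : Set ℝ} (hne : E.Nonempty) (h0 : ∀ a ∈ E, (0:ℝ) < a)
    (mono : ∀ a ∈ E, ∀ b, a ≤ b → b ∈ E) {ε : ℝ} (h : sInf E < ε) : ε ∈ E := by
  obtain ⟨a, ha, hlt⟩ := (csInf_lt_iff ⟨0, fun b hb => (h0 b hb).le⟩ hne).1 h
  exact mono a ha ε hlt.le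

private lemma aux_le_of_forall_gt {a b : ℝ} (h : ∀ ε : ℝ, b < ε → a ≤ ε) : a ≤ b := by
  by_contra h'
  push_neg at h'
  have := h ((b + a) / 2) (by linarith)
  linarith

private lemma aux_le_of_forall_Ioo {a b c : ℝ} (hc : b < c)
    (h : ∀ ε : ℝ, b < ε → ε < c → a ≤ ε) : a ≤ b := by
  by_contra h'
  push_neg at h'
  have hbm : b < min a c := lt_min h' hc
  have h1 : b < (b + min a c) / 2 := by linarith
  have h2 : (b + min a c) / 2 < min a c := by linarith
  have := h _ h1 (h2.trans_le (min_le_right _ _))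
  have := h2.trans_le (min_le_left _ _)
  linarith

private lemma aux_sum_split {M : Type*} [AddCommMonoid M] (f : ℕ → M) {r k : ℕ} (hr : r ≤ k) :
    ∑ j ∈ Finset.Icc 1 k, f j
      = ∑ j ∈ Finset.Icc 1 r, f j + ∑ j ∈ Finset.Icc (r+1) k, f j := by
  have e : ∀ n : ℕ, Finset.Icc 1 n = Finset.Ioc 0 n := by
    intro n; ext a; simp [Finset.mem_Icc, Finset.mem_Ioc]; omega
  have e2 : Finset.Icc (r+1) k = Finset.Ioc r k := by
    ext a; simp [Finset.mem_Icc, Finset.mem_Ioc]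
  rw [e, e, e2, ← Finset.sum_Ioc_consecutive f (Nat.zero_le r) hr]
/-- Lemma 3.6: the `w̃`-witness function of the remaining part `ϑ̃` of `ϑ` (after removing
the detected atoms `y_{j,l}`) can be expressed at the point `x` through the Lévy–Prokhorov
distances between `ϑ` and the measures `η_r`. Property `(P_r)` is `π(η_{r-1}, ϑ) ≤ ρ_r`. -/
theorem switness_of_remainder {X : Type*} [NormedAddCommGroup X] [NormedSpace ℝ X]
    [CompleteSpace X] [SeparableSpace X] [MeasurableSpace X] [BorelSpace X]
    (ϑ : ProbabilityMeasure X) (x : X)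
    (k : ℕ) (hk : 1 ≤ k)
    (d : ℕ → ℕ) (hd : ∀ j ∈ Finset.Icc 1 k, 1 ≤ d j)
    (y : ℕ → ℕ → X)
    (hy : ∀ j ∈ Finset.Icc 1 k, ∀ l ∈ Finset.Icc 1 (d j), ∀ j' ∈ Finset.Icc 1 k,
      ∀ l' ∈ Finset.Icc 1 (d j'), y j l = y j' l' → j = j' ∧ l = l')
    (ρ : ℕ → ℝ)
    (hρ : ∀ j ∈ Finset.Icc 1 k, ∀ l ∈ Finset.Icc 1 (d j), ‖x - y j l‖ = ρ j)
    (hρpos : 0 < ρ k)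
    (hρdec : ∀ j ∈ Finset.Icc 1 (k - 1), ρ (j + 1) < ρ j)
    (w : ℕ → ℕ → ℝ)
    (hw : ∀ j ∈ Finset.Icc 1 k, ∀ l ∈ Finset.Icc 1 (d j),
      0 < w j l ∧ (ϑ : Measure X) {y j l} = ENNReal.ofReal (w j l))
    (wt : ℝ)
    (hwt : wt = 1 - ∑ j ∈ Finset.Icc 1 k, ∑ l ∈ Finset.Icc 1 (d j), w j l)
    (hwtpos : 0 < wt)
    (η : ℕ → ProbabilityMeasure X)
    (hη : ∀ r ∈ Finset.Icc 0 k, (η r : Measure X) =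
      (∑ j ∈ Finset.Icc 1 r, ∑ l ∈ Finset.Icc 1 (d j),
        ENNReal.ofReal (w j l) • Measure.dirac (y j l)) +
      ENNReal.ofReal (1 - ∑ j ∈ Finset.Icc 1 r, ∑ l ∈ Finset.Icc 1 (d j), w j l) •
        Measure.dirac x)
    (ϑt : ProbabilityMeasure X)
    (hϑt : (ϑ : Measure X) =
      (∑ j ∈ Finset.Icc 1 k, ∑ l ∈ Finset.Icc 1 (d j),
        ENNReal.ofReal (w j l) • Measure.dirac (y j l)) +
      ENNReal.ofReal wt • (ϑt : Measure X)) :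
    (¬ LPdist (η 0) ϑ ≤ ρ 1 → switness wt ϑt x = LPdist (diracPM x) ϑ) ∧
    (∀ r : ℕ, 1 ≤ r → r < k → LPdist (η (r - 1)) ϑ ≤ ρ r → ¬ LPdist (η r) ϑ ≤ ρ (r + 1) →
      switness wt ϑt x = LPdist (η r) ϑ) ∧
    (LPdist (η (k - 1)) ϑ ≤ ρ k → switness wt ϑt x = LPdist (η k) ϑ) := by
  classical
  have hwpos : ∀ j ∈ Finset.Icc 1 k, ∀ l ∈ Finset.Icc 1 (d j), 0 < w j l :=
    fun j hj l hl => (hw j hj l hl).1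
  -- antitonicity of ρ on [1, k]
  have hmono' : ∀ b : ℕ, b ≤ k → ∀ a : ℕ, 1 ≤ a → a ≤ b → ρ b ≤ ρ a := by
    intro b
    induction b with
    | zero => intro _ a ha hab; exact absurd (ha.trans hab) (by omega)
    | succ n ih =>
      intro hbk a ha hab
      rcases Nat.eq_or_lt_of_le hab with h | h
      · rw [h]
      · have h1 : a ≤ n := Nat.lt_succ_iff.mp h
        have hdec : ρ (n + 1) < ρ n :=
          hρdec n (Finset.mem_Icc.mpr ⟨by omega, by omega⟩)
        exact le_trans hdec.le (ih (by omega) a ha h1)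
  have hmono : ∀ a b : ℕ, 1 ≤ a → a ≤ b → b ≤ k → ρ b ≤ ρ a :=
    fun a b ha hab hbk => hmono' b hbk a ha hab
  have hρpos' : ∀ j : ℕ, 1 ≤ j → j ≤ k → 0 < ρ j :=
    fun j h1 h2 => lt_of_lt_of_le hρpos (hmono j k h1 h2 le_rfl)
  have hxy : ∀ j ∈ Finset.Icc 1 k, ∀ l ∈ Finset.Icc 1 (d j), x ≠ y j l := by
    intro j hj l hl h
    have h2 := hρ j hj l hl
    rw [← h, sub_self, norm_zero] at h2
    obtain ⟨hj1, hj2⟩ := Finset.mem_Icc.mp hj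
    exact absurd h2.symm (ne_of_gt (hρpos' j hj1 hj2))
  have hdist : ∀ j ∈ Finset.Icc 1 k, ∀ l ∈ Finset.Icc 1 (d j), dist (y j l) x = ρ j := by
    intro j hj l hl
    rw [dist_comm, dist_eq_norm]
    exact hρ j hj l hl
  -- the atomic part of the measures, as a function of sets
  set Wr : ℕ → Set X → ENNReal := fun r S => ∑ j ∈ Finset.Icc 1 r, ∑ l ∈ Finset.Icc 1 (d j),
    ENNReal.ofReal (w j l) * (Measure.dirac (y j l) : Measure X) S with hWrdef
  have hWr_apply : ∀ (r : ℕ) (S : Set X),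
      ((∑ j ∈ Finset.Icc 1 r, ∑ l ∈ Finset.Icc 1 (d j),
        ENNReal.ofReal (w j l) • Measure.dirac (y j l) : Measure X)) S = Wr r S := by
    intro r S
    rw [Measure.finset_sum_apply]
    refine Finset.sum_congr rfl fun j hj => ?_
    rw [Measure.finset_sum_apply]
    exact Finset.sum_congr rfl fun l hl => by rw [Measure.smul_apply, smul_eq_mul]
  have hθapp : ∀ S : Set X,
      (ϑ : Measure X) S = Wr k S + ENNReal.ofReal wt * (ϑt : Measure X) S := by
    intro S
    rw [hϑt, Measure.add_apply, hWr_apply, Measure.smul_apply, smul_eq_mul]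
  have hηapp : ∀ r : ℕ, r ≤ k → ∀ S : Set X, ((η r : Measure X)) S
      = Wr r S + ENNReal.ofReal (1 - ∑ j ∈ Finset.Icc 1 r, ∑ l ∈ Finset.Icc 1 (d j), w j l)
          * (Measure.dirac x : Measure X) S := by
    intro r hr S
    rw [hη r (Finset.mem_Icc.mpr ⟨Nat.zero_le r, hr⟩), Measure.add_apply, hWr_apply,
      Measure.smul_apply, smul_eq_mul]
  -- splitting the atomic sums
  have hWsplit : ∀ (r : ℕ), r ≤ k → ∀ S : Set X, Wr k S
      = Wr r S + ∑ j ∈ Finset.Icc (r+1) k, ∑ l ∈ Finset.Icc 1 (d j),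
          ENNReal.ofReal (w j l) * (Measure.dirac (y j l) : Measure X) S := by
    intro r hr S
    exact aux_sum_split _ hr
  -- the leftover weights
  have hwt_sum : ∀ r : ℕ, r ≤ k →
      ENNReal.ofReal (1 - ∑ j ∈ Finset.Icc 1 r, ∑ l ∈ Finset.Icc 1 (d j), w j l)
        = ENNReal.ofReal wt
          + ∑ j ∈ Finset.Icc (r+1) k, ∑ l ∈ Finset.Icc 1 (d j), ENNReal.ofReal (w j l) := by
    intro r hr
    have hsplit := aux_sum_split (fun j => ∑ l ∈ Finset.Icc 1 (d j), w j l) hr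
    have h1 : 1 - (∑ j ∈ Finset.Icc 1 r, ∑ l ∈ Finset.Icc 1 (d j), w j l)
        = wt + ∑ j ∈ Finset.Icc (r+1) k, ∑ l ∈ Finset.Icc 1 (d j), w j l := by
      rw [hwt]; linarith
    rw [h1, ENNReal.ofReal_add hwtpos.le]
    · congr 1
      rw [ENNReal.ofReal_sum_of_nonneg]
      · refine Finset.sum_congr rfl fun j hj => ?_
        rw [ENNReal.ofReal_sum_of_nonneg]
        intro l hl
        exact (hwpos j (Finset.mem_Icc.mpr (by
          have := Finset.mem_Icc.mp hj; omega)) l hl).le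
      · intro j hj
        refine Finset.sum_nonneg fun l hl => ?_
        exact (hwpos j (Finset.mem_Icc.mpr (by
          have := Finset.mem_Icc.mp hj; omega)) l hl).le
    · refine Finset.sum_nonneg fun j hj => Finset.sum_nonneg fun l hl => ?_
      exact (hwpos j (Finset.mem_Icc.mpr (by
        have := Finset.mem_Icc.mp hj; omega)) l hl).le
  -- the score set for the s-witness and the condition sets for the LP distances
  set SS : Set ℝ := {ε : ℝ | 0 < ε ∧ ENNReal.ofReal wt
      ≤ ENNReal.ofReal wt * (ϑt : Measure X) (ball x ε) + ENNReal.ofReal ε} with hSSdef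
  set EE : ℕ → Set ℝ := fun r => {ε : ℝ | 0 < ε ∧ ∀ A : Set X, MeasurableSet A →
      (η r : Measure X) A ≤ (ϑ : Measure X) (thickening ε A) + ENNReal.ofReal ε} with hEEdef
  have hLP : ∀ r : ℕ, LPdist (η r) ϑ = sInf (EE r) := fun r => rfl
  have hdpm : (diracPM x : Measure X) = Measure.dirac x := rfl
  have hsw : switness wt ϑt x = sInf SS := by
    show LPsdist wt (diracPM x) ϑt = sInf SS
    unfold LPsdist
    congr 1
    ext ε
    simp only [hSSdef, Set.mem_setOf_eq]
    constructor
    · rintro ⟨hε, h⟩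
      refine ⟨hε, ?_⟩
      have h2 := h {x} (measurableSet_singleton x)
      rwa [hdpm, Measure.dirac_apply_of_mem (Set.mem_singleton x), mul_one,
        thickening_singleton] at h2
    · rintro ⟨hε, h⟩
      refine ⟨hε, fun A hA => ?_⟩
      by_cases hxA : x ∈ A
      · rw [hdpm, Measure.dirac_apply_of_mem hxA, mul_one]
        refine h.trans (add_le_add_left (mul_le_mul_right (measure_mono ?_) _) _)
        rw [← thickening_singleton]
        exact thickening_subset_of_subset ε (Set.singleton_subset_iff.mpr hxA)
      · rw [hdpm, Measure.dirac_apply' _ hA, Set.indicator_of_notMem hxA, mul_zero]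
        exact zero_le
  -- basic properties of the sets
  have hwtle1 : wt ≤ 1 := by
    rw [hwt]
    have : (0:ℝ) ≤ ∑ j ∈ Finset.Icc 1 k, ∑ l ∈ Finset.Icc 1 (d j), w j l :=
      Finset.sum_nonneg fun j hj => Finset.sum_nonneg fun l hl => (hwpos j hj l hl).le
    linarith
  have hSpos : ∀ a ∈ SS, (0:ℝ) < a := fun a ha => ha.1
  have hEpos : ∀ r : ℕ, ∀ a ∈ EE r, (0:ℝ) < a := fun r a ha => ha.1
  have hSne : SS.Nonempty := by
    refine ⟨2, two_pos, ?_⟩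
    calc ENNReal.ofReal wt ≤ ENNReal.ofReal 2 := ENNReal.ofReal_le_ofReal (by linarith)
    _ ≤ ENNReal.ofReal wt * (ϑt : Measure X) (ball x 2) + ENNReal.ofReal 2 := le_add_self
  have hEne : ∀ r : ℕ, (EE r).Nonempty := by
    intro r
    refine ⟨2, two_pos, fun A hA => ?_⟩
    calc (η r : Measure X) A ≤ 1 := prob_le_one
    _ ≤ ENNReal.ofReal 2 := ENNReal.one_le_ofReal.mpr one_le_two
    _ ≤ (ϑ : Measure X) (thickening 2 A) + ENNReal.ofReal 2 := le_add_self
  have hSmono : ∀ a ∈ SS, ∀ b : ℝ, a ≤ b → b ∈ SS := by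
    rintro a ⟨ha, hsc⟩ b hab
    refine ⟨lt_of_lt_of_le ha hab, hsc.trans (add_le_add ?_ (ENNReal.ofReal_le_ofReal hab))⟩
    exact mul_le_mul_right (measure_mono (ball_subset_ball hab)) _
  have hEmono : ∀ r : ℕ, ∀ a ∈ EE r, ∀ b : ℝ, a ≤ b → b ∈ EE r := by
    rintro r a ⟨ha, hc⟩ b hab
    refine ⟨lt_of_lt_of_le ha hab, fun A hA => (hc A hA).trans
      (add_le_add (measure_mono (thickening_mono hab A)) (ENNReal.ofReal_le_ofReal hab))⟩
  have hT_mem : ∀ ε : ℝ, sInf SS < ε → ε ∈ SS :=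
    fun ε h => aux_mem_of_lt hSne hSpos hSmono h
  have hT_le : ∀ ε ∈ SS, sInf SS ≤ ε := fun ε h => aux_sInf_le hSpos h
  have hE_mem : ∀ r : ℕ, ∀ ε : ℝ, sInf (EE r) < ε → ε ∈ EE r :=
    fun r ε h => aux_mem_of_lt (hEne r) (hEpos r) (hEmono r) h
  have hE_le : ∀ r : ℕ, ∀ ε ∈ EE r, sInf (EE r) ≤ ε := fun r ε h => aux_sInf_le (hEpos r) h
  have hSnonneg : 0 ≤ sInf SS := aux_sInf_nonneg hSne hSpos
  have hEnonneg : ∀ r : ℕ, 0 ≤ sInf (EE r) := fun r => aux_sInf_nonneg (hEne r) (hEpos r)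
  -- Direction 2: the LP condition for η r implies the score condition,
  -- provided ε ≤ ρ j for all 1 ≤ j ≤ r
  have hDir2 : ∀ r : ℕ, r ≤ k → ∀ ε : ℝ, 0 < ε → (∀ j : ℕ, 1 ≤ j → j ≤ r → ε ≤ ρ j) →
      (∀ A : Set X, MeasurableSet A →
        (η r : Measure X) A ≤ (ϑ : Measure X) (thickening ε A) + ENNReal.ofReal ε) →
      ENNReal.ofReal wt ≤ ENNReal.ofReal wt * (ϑt : Measure X) (ball x ε)
        + ENNReal.ofReal ε := by
    intro r hr ε hε hub hc
    have h1 := hc {x} (measurableSet_singleton x)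
    rw [hηapp r hr, thickening_singleton, hθapp] at h1
    have hWx : Wr r {x} = 0 := by
      refine Finset.sum_eq_zero fun j hj => Finset.sum_eq_zero fun l hl => ?_
      have hj' : j ∈ Finset.Icc 1 k := by
        have := Finset.mem_Icc.mp hj; exact Finset.mem_Icc.mpr (by omega)
      rw [Measure.dirac_apply' _ (measurableSet_singleton x),
        Set.indicator_of_notMem (by
          simp only [Set.mem_singleton_iff]
          exact fun h => hxy j hj' l hl h.symm), mul_zero]
    rw [hWx, zero_add, Measure.dirac_apply_of_mem (Set.mem_singleton x), mul_one,
      hwt_sum r hr] at h1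
    set tail : ENNReal := ∑ j ∈ Finset.Icc (r+1) k, ∑ l ∈ Finset.Icc 1 (d j),
      ENNReal.ofReal (w j l) with htaildef
    have htailne : tail ≠ ⊤ := by
      rw [htaildef]
      exact ENNReal.sum_ne_top.mpr fun j hj =>
        ENNReal.sum_ne_top.mpr fun l hl => ENNReal.ofReal_ne_top
    have hWball : Wr k (ball x ε) ≤ tail := by
      rw [hWsplit r hr]
      have hz : Wr r (ball x ε) = 0 := by
        refine Finset.sum_eq_zero fun j hj => Finset.sum_eq_zero fun l hl => ?_
        obtain ⟨hj1, hj2⟩ := Finset.mem_Icc.mp hj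
        have hj' : j ∈ Finset.Icc 1 k := Finset.mem_Icc.mpr ⟨hj1, hj2.trans hr⟩
        rw [Measure.dirac_apply' _ measurableSet_ball, Set.indicator_of_notMem, mul_zero]
        rw [mem_ball]
        push_neg
        rw [hdist j hj' l hl]
        exact hub j hj1 hj2
      rw [hz, zero_add, htaildef]
      refine Finset.sum_le_sum fun j hj => Finset.sum_le_sum fun l hl => ?_
      calc ENNReal.ofReal (w j l) * (Measure.dirac (y j l) : Measure X) (ball x ε)
          ≤ ENNReal.ofReal (w j l) * 1 := mul_le_mul_right prob_le_one _
      _ = ENNReal.ofReal (w j l) := mul_one _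
    have h2 : ENNReal.ofReal wt + tail
        ≤ (ENNReal.ofReal wt * (ϑt : Measure X) (ball x ε) + ENNReal.ofReal ε) + tail := by
      calc ENNReal.ofReal wt + tail
          ≤ (Wr k (ball x ε) + ENNReal.ofReal wt * (ϑt : Measure X) (ball x ε))
            + ENNReal.ofReal ε := h1
      _ ≤ (tail + ENNReal.ofReal wt * (ϑt : Measure X) (ball x ε)) + ENNReal.ofReal ε :=
          add_le_add_left (add_le_add_left hWball _) _
      _ = (ENNReal.ofReal wt * (ϑt : Measure X) (ball x ε) + ENNReal.ofReal ε) + tail := by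
          ring
    exact (ENNReal.add_le_add_iff_right htailne).mp h2
  -- Direction 1: the score condition implies the LP condition for η r,
  -- provided ρ j < ε for all r < j ≤ k
  have hDir1 : ∀ r : ℕ, r ≤ k → ∀ ε : ℝ, 0 < ε → (∀ j : ℕ, r < j → j ≤ k → ρ j < ε) →
      (ENNReal.ofReal wt ≤ ENNReal.ofReal wt * (ϑt : Measure X) (ball x ε)
        + ENNReal.ofReal ε) →
      ∀ A : Set X, MeasurableSet A →
        (η r : Measure X) A ≤ (ϑ : Measure X) (thickening ε A) + ENNReal.ofReal ε := by
    intro r hr ε hε hlb hs A hA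
    rw [hηapp r hr, hθapp]
    have hWmono : ∀ (r' : ℕ) (S S' : Set X), S ⊆ S' → Wr r' S ≤ Wr r' S' := by
      intro r' S S' hSS
      exact Finset.sum_le_sum fun j hj => Finset.sum_le_sum fun l hl =>
        mul_le_mul_right (measure_mono hSS) _
    by_cases hxA : x ∈ A
    · rw [Measure.dirac_apply_of_mem hxA, mul_one, hwt_sum r hr]
      have h1 : Wr r A ≤ Wr r (thickening ε A) :=
        hWmono r _ _ (self_subset_thickening hε A)
      have h2 : ∑ j ∈ Finset.Icc (r+1) k, ∑ l ∈ Finset.Icc 1 (d j), ENNReal.ofReal (w j l)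
          ≤ ∑ j ∈ Finset.Icc (r+1) k, ∑ l ∈ Finset.Icc 1 (d j),
            ENNReal.ofReal (w j l) * (Measure.dirac (y j l) : Measure X) (thickening ε A) := by
        refine Finset.sum_le_sum fun j hj => Finset.sum_le_sum fun l hl => ?_
        obtain ⟨hj1, hj2⟩ := Finset.mem_Icc.mp hj
        have hj' : j ∈ Finset.Icc 1 k := Finset.mem_Icc.mpr ⟨by omega, hj2⟩
        have hmem : y j l ∈ thickening ε A := by
          refine ball_subset_thickening hxA ε ?_
          rw [mem_ball, hdist j hj' l hl]
          exact hlb j (by omega) hj2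
        rw [Measure.dirac_apply_of_mem hmem, mul_one]
      have h3 : ENNReal.ofReal wt
          ≤ ENNReal.ofReal wt * (ϑt : Measure X) (thickening ε A) + ENNReal.ofReal ε :=
        hs.trans (add_le_add_left (mul_le_mul_right
          (measure_mono (ball_subset_thickening hxA ε)) _) _)
      calc Wr r A + (ENNReal.ofReal wt
            + ∑ j ∈ Finset.Icc (r+1) k, ∑ l ∈ Finset.Icc 1 (d j), ENNReal.ofReal (w j l))
          ≤ Wr r (thickening ε A)
            + ((ENNReal.ofReal wt * (ϑt : Measure X) (thickening ε A) + ENNReal.ofReal ε)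
              + ∑ j ∈ Finset.Icc (r+1) k, ∑ l ∈ Finset.Icc 1 (d j),
                ENNReal.ofReal (w j l) * (Measure.dirac (y j l) : Measure X) (thickening ε A)) :=
            add_le_add h1 (add_le_add h3 h2)
      _ = ((Wr r (thickening ε A)
            + ∑ j ∈ Finset.Icc (r+1) k, ∑ l ∈ Finset.Icc 1 (d j),
              ENNReal.ofReal (w j l) * (Measure.dirac (y j l) : Measure X) (thickening ε A))
            + ENNReal.ofReal wt * (ϑt : Measure X) (thickening ε A)) + ENNReal.ofReal ε := by
          ring
      _ = (Wr k (thickening ε A) + ENNReal.ofReal wt * (ϑt : Measure X) (thickening ε A))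
            + ENNReal.ofReal ε := by rw [← hWsplit r hr]
    · rw [Measure.dirac_apply' _ hA, Set.indicator_of_notMem hxA, mul_zero, add_zero]
      calc Wr r A ≤ Wr r (thickening ε A) := hWmono r _ _ (self_subset_thickening hε A)
      _ ≤ Wr k (thickening ε A) := by
          rw [hWsplit r hr]; exact le_self_add
      _ ≤ (Wr k (thickening ε A) + ENNReal.ofReal wt * (ϑt : Measure X) (thickening ε A))
            + ENNReal.ofReal ε := by exact le_add_right le_self_add
  refine ⟨?_, ?_, ?_⟩
  · -- Case r = 0 : x does not have property (P₁)
    intro hP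
    have hη0 : η 0 = diracPM x := by
      apply Subtype.ext
      show (η 0 : Measure X) = Measure.dirac x
      rw [hη 0 (Finset.mem_Icc.mpr ⟨le_rfl, Nat.zero_le k⟩)]
      rw [show Finset.Icc 1 0 = (∅ : Finset ℕ) from Finset.Icc_eq_empty (by omega)]
      simp
    rw [hsw, ← hη0, hLP 0]
    rw [hLP 0] at hP
    have hP' : ρ 1 < sInf (EE 0) := not_le.mp hP
    have hρ1pos : 0 < ρ 1 := hρpos' 1 le_rfl hk
    apply le_antisymm
    · apply aux_le_of_forall_gt
      intro ε hε
      have hεpos : 0 < ε := (hρ1pos.trans hP').trans hε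
      exact hT_le ε ⟨hεpos,
        hDir2 0 (Nat.zero_le k) ε hεpos (fun j hj1 hj2 => absurd (hj1.trans hj2) (by omega))
          (hE_mem 0 ε hε).2⟩
    · have hTlb : ρ 1 < sInf SS := by
        by_contra h
        push_neg at h
        have h2 : sInf (EE 0) ≤ ρ 1 := by
          apply aux_le_of_forall_gt
          intro ε hε
          have hεpos : 0 < ε := hρ1pos.trans hε
          have hlb : ∀ j : ℕ, 0 < j → j ≤ k → ρ j < ε :=
            fun j h1 h2' => lt_of_le_of_lt (hmono 1 j le_rfl h1 h2') hε
          exact hE_le 0 ε ⟨hεpos, hDir1 0 (Nat.zero_le k) ε hεpos hlb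
            (hT_mem ε (lt_of_le_of_lt h hε)).2⟩
        linarith
      apply aux_le_of_forall_gt
      intro ε hε
      have hεpos : 0 < ε := (hρ1pos.trans hTlb).trans hε
      have hlb : ∀ j : ℕ, 0 < j → j ≤ k → ρ j < ε :=
        fun j h1 h2' => lt_of_le_of_lt (hmono 1 j le_rfl h1 h2') (hTlb.trans hε)
      exact hE_le 0 ε ⟨hεpos, hDir1 0 (Nat.zero_le k) ε hεpos hlb (hT_mem ε hε).2⟩
  · -- Case 1 ≤ r < k : x has (P_r) but not (P_{r+1})
    intro r hr1 hrk hP hQ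
    rw [hsw, hLP r]
    rw [hLP (r-1)] at hP
    rw [hLP r] at hQ
    have hQ' : ρ (r+1) < sInf (EE r) := not_le.mp hQ
    have hm : r - 1 + 1 = r := Nat.succ_pred_eq_of_pos hr1
    have hρrpos : 0 < ρ r := hρpos' r hr1 hrk.le
    have hTρ : sInf SS ≤ ρ r := by
      rcases Nat.lt_or_ge 1 r with hr2 | hr1'
      · have hlt : ρ r < ρ (r-1) := by
          have h2 := hρdec (r-1) (Finset.mem_Icc.mpr ⟨by omega, by omega⟩)
          rwa [hm] at h2
        apply aux_le_of_forall_Ioo hlt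
        intro ε h1 h2
        have hεpos : 0 < ε := hρrpos.trans h1
        have hub : ∀ j : ℕ, 1 ≤ j → j ≤ r - 1 → ε ≤ ρ j :=
          fun j hj1 hj2 => h2.le.trans (hmono j (r-1) hj1 hj2 (by omega))
        exact hT_le ε ⟨hεpos, hDir2 (r-1) (by omega) ε hεpos hub
          (hE_mem (r-1) ε (lt_of_le_of_lt hP h1)).2⟩
      · apply aux_le_of_forall_gt
        intro ε h1
        have hεpos : 0 < ε := hρrpos.trans h1
        have hub : ∀ j : ℕ, 1 ≤ j → j ≤ r - 1 → ε ≤ ρ j :=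
          fun j hj1 hj2 => absurd (hj1.trans hj2) (by omega)
        exact hT_le ε ⟨hεpos, hDir2 (r-1) (by omega) ε hεpos hub
          (hE_mem (r-1) ε (lt_of_le_of_lt hP h1)).2⟩
    have hTlb : ρ (r+1) < sInf SS := by
      by_contra h
      push_neg at h
      have h2 : sInf (EE r) ≤ ρ (r+1) := by
        apply aux_le_of_forall_gt
        intro ε hε
        have hεpos : 0 < ε := (hρpos' (r+1) (by omega) (by omega)).trans hε
        have hlb : ∀ j : ℕ, r < j → j ≤ k → ρ j < ε :=
          fun j h1 h2' => lt_of_le_of_lt (hmono (r+1) j (by omega) (by omega) h2') hε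
        exact hE_le r ε ⟨hεpos, hDir1 r hrk.le ε hεpos hlb
          (hT_mem ε (lt_of_le_of_lt h hε)).2⟩
      linarith
    apply le_antisymm
    · rcases lt_or_ge (sInf (EE r)) (ρ r) with h | h
      · apply aux_le_of_forall_Ioo h
        intro ε h1 h2
        have hεpos : 0 < ε := lt_of_le_of_lt (hEnonneg r) h1
        have hub : ∀ j : ℕ, 1 ≤ j → j ≤ r → ε ≤ ρ j :=
          fun j hj1 hj2 => h2.le.trans (hmono j r hj1 hj2 hrk.le)
        exact hT_le ε ⟨hεpos, hDir2 r hrk.le ε hεpos hub (hE_mem r ε h1).2⟩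
      · exact hTρ.trans h
    · apply aux_le_of_forall_gt
      intro ε hε
      have hεpos : 0 < ε := lt_of_le_of_lt hSnonneg hε
      have hlb : ∀ j : ℕ, r < j → j ≤ k → ρ j < ε :=
        fun j h1 h2' => lt_of_le_of_lt (hmono (r+1) j (by omega) (by omega) h2')
          (hTlb.trans hε)
      exact hE_le r ε ⟨hεpos, hDir1 r hrk.le ε hεpos hlb (hT_mem ε hε).2⟩
  · -- Case r = k : x has (P_k)
    intro hP
    rw [hsw, hLP k]
    rw [hLP (k-1)] at hP
    have hm : k - 1 + 1 = k := Nat.succ_pred_eq_of_pos hk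
    have hTρ : sInf SS ≤ ρ k := by
      rcases Nat.lt_or_ge 1 k with hk2 | hk1
      · have hlt : ρ k < ρ (k-1) := by
          have h2 := hρdec (k-1) (Finset.mem_Icc.mpr ⟨by omega, le_rfl⟩)
          rwa [hm] at h2
        apply aux_le_of_forall_Ioo hlt
        intro ε h1 h2
        have hεpos : 0 < ε := hρpos.trans h1
        have hub : ∀ j : ℕ, 1 ≤ j → j ≤ k - 1 → ε ≤ ρ j :=
          fun j hj1 hj2 => h2.le.trans (hmono j (k-1) hj1 hj2 (Nat.sub_le k 1))
        exact hT_le ε ⟨hεpos, hDir2 (k-1) (Nat.sub_le k 1) ε hεpos hub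
          (hE_mem (k-1) ε (lt_of_le_of_lt hP h1)).2⟩
      · apply aux_le_of_forall_gt
        intro ε h1
        have hεpos : 0 < ε := hρpos.trans h1
        have hub : ∀ j : ℕ, 1 ≤ j → j ≤ k - 1 → ε ≤ ρ j :=
          fun j hj1 hj2 => absurd (hj1.trans hj2) (by omega)
        exact hT_le ε ⟨hεpos, hDir2 (k-1) (Nat.sub_le k 1) ε hεpos hub
          (hE_mem (k-1) ε (lt_of_le_of_lt hP h1)).2⟩
    apply le_antisymm
    · rcases lt_or_ge (sInf (EE k)) (ρ k) with h | h
      · apply aux_le_of_forall_Ioo h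
        intro ε h1 h2
        have hεpos : 0 < ε := lt_of_le_of_lt (hEnonneg k) h1
        have hub : ∀ j : ℕ, 1 ≤ j → j ≤ k → ε ≤ ρ j :=
          fun j hj1 hj2 => h2.le.trans (hmono j k hj1 hj2 le_rfl)
        exact hT_le ε ⟨hεpos, hDir2 k le_rfl ε hεpos hub (hE_mem k ε h1).2⟩
      · exact hTρ.trans h
    · apply aux_le_of_forall_gt
      intro ε hε
      have hεpos : 0 < ε := lt_of_le_of_lt hSnonneg hε
      have hlb : ∀ j : ℕ, k < j → j ≤ k → ρ j < ε :=
        fun j h1 h2' => absurd (h1.trans_le h2') (lt_irrefl k)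
      exact hE_le k ε ⟨hεpos, hDir1 k le_rfl ε hεpos hlb (hT_mem ε hε).2⟩
end
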